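/- Every closed simply-typed λ-term M in normal form of type σ possesses a principal relational type, its 1-point 𝖬 ∈ ⟦σ⟧, with the property that for every closed simply-typed λ-term N of type σ, M =βη N if and only if ⊳ N : 𝖬 : σ. -/

import Mathlib

/-! Simple types over a base type `o`, and the relational semantics
(non-idempotent intersection types): `o` is interpreted by a countably
infinite set of atoms (here `ℕ`), and `σ → τ` by finite multisets over the
web of `σ` paired with the web of `τ`. -/

/-- Simple types over the base type `o`. -/
inductive Ty : Type
  | o : Ty
  | arrow : Ty → Ty → Ty

/-- The relational web of a simple type. -/
def Web : Ty → Type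
  | .o => ℕ
  | .arrow σ τ => Multiset (Web σ) × Web τ

/-- Typed de Bruijn variables. -/
inductive Var : List Ty → Ty → Type
  | zero {Γ σ} : Var (σ :: Γ) σ
  | succ {Γ σ τ} : Var Γ σ → Var (τ :: Γ) σ

/-- Intrinsically simply-typed λ-terms. -/
inductive Tm : List Ty → Ty → Type
  | var {Γ σ} : Var Γ σ → Tm Γ σ
  | lam {Γ σ τ} : Tm (σ :: Γ) τ → Tm Γ (Ty.arrow σ τ)
  | app {Γ σ τ} : Tm Γ (Ty.arrow σ τ) → Tm Γ σ → Tm Γ τ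

/-- Renamings between contexts. -/
def Ren (Γ Δ : List Ty) : Type := ∀ σ, Var Γ σ → Var Δ σ

/-- Lifting a renaming under a binder. -/
def Ren.lift {Γ Δ : List Ty} (ρ : Ren Γ Δ) (τ : Ty) : Ren (τ :: Γ) (τ :: Δ) :=
  fun _ v =>
    match v with
    | .zero => .zero
    | .succ w => .succ (ρ _ w)

/-- Applying a renaming to a term. -/
def rename : {Γ Δ : List Ty} → Ren Γ Δ → {σ : Ty} → Tm Γ σ → Tm Δ σ
  | _, _, ρ, _, .var v => .var (ρ _ v)
  | _, _, ρ, _, .lam M => .lam (rename (Ren.lift ρ _) M)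
  | _, _, ρ, _, .app M N => .app (rename ρ M) (rename ρ N)

/-- Substitutions between contexts. -/
def Subst (Γ Δ : List Ty) : Type := ∀ σ, Var Γ σ → Tm Δ σ

/-- Lifting a substitution under a binder. -/
def Subst.lift {Γ Δ : List Ty} (s : Subst Γ Δ) (τ : Ty) : Subst (τ :: Γ) (τ :: Δ) :=
  fun _ v =>
    match v with
    | .zero => .var .zero
    | .succ w => rename (fun _ u => Var.succ u) (s _ w)

/-- Applying a substitution to a term. -/
def subst : {Γ Δ : List Ty} → Subst Γ Δ → {σ : Ty} → Tm Γ σ → Tm Δ σ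
  | _, _, s, _, .var v => s _ v
  | _, _, s, _, .lam M => .lam (subst (Subst.lift s _) M)
  | _, _, s, _, .app M N => .app (subst s M) (subst s N)

/-- The substitution replacing the last variable by `N`. -/
def Subst.cons {Γ : List Ty} {σ : Ty} (N : Tm Γ σ) : Subst (σ :: Γ) Γ :=
  fun _ v =>
    match v with
    | .zero => N
    | .succ w => .var w

/-- Substitution of the last variable. -/
def subst1 {Γ : List Ty} {σ τ : Ty} (M : Tm (σ :: Γ) τ) (N : Tm Γ σ) : Tm Γ τ :=
  subst (Subst.cons N) M

/-- βη-convertibility of simply-typed λ-terms. -/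
inductive BetaEta : {Γ : List Ty} → {σ : Ty} → Tm Γ σ → Tm Γ σ → Prop
  | refl {Γ σ} (M : Tm Γ σ) : BetaEta M M
  | symm {Γ σ} {M N : Tm Γ σ} : BetaEta M N → BetaEta N M
  | trans {Γ σ} {M N P : Tm Γ σ} : BetaEta M N → BetaEta N P → BetaEta M P
  | app_congr {Γ σ τ} {M M' : Tm Γ (Ty.arrow σ τ)} {N N' : Tm Γ σ} :
      BetaEta M M' → BetaEta N N' → BetaEta (M.app N) (M'.app N')
  | lam_congr {Γ σ τ} {M M' : Tm (σ :: Γ) τ} : BetaEta M M' → BetaEta M.lam M'.lam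
  | beta {Γ σ τ} (M : Tm (σ :: Γ) τ) (N : Tm Γ σ) : BetaEta (Tm.app M.lam N) (subst1 M N)
  | eta {Γ σ τ} (M : Tm Γ (Ty.arrow σ τ)) :
      BetaEta M (Tm.lam (Tm.app (rename (fun _ v => Var.succ v) M) (Tm.var Var.zero)))

/-- Relational environments: a finite multiset over the web of `σ` for each
variable of type `σ` in the context. -/
def REnv (Γ : List Ty) : Type := ∀ σ, Var Γ σ → Multiset (Web σ)

/-- Extending a relational environment. -/
def REnv.cons {Γ : List Ty} {σ : Ty} (X : Multiset (Web σ)) (ρ : REnv Γ) :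
    REnv (σ :: Γ) :=
  fun _ v =>
    match v with
    | .zero => X
    | .succ w => ρ _ w

/-- The empty relational environment. -/
def REnv.nil : REnv [] := fun _ v => nomatch v

/-- The relational semantics of a typing sequent: `Sem M ρ α` means that the
tuple `(ρ, α)` belongs to the relational interpretation `⟦x̄:σ̄ ⊢ M : σ⟧`. -/
def Sem : {Γ : List Ty} → {σ : Ty} → Tm Γ σ → REnv Γ → Web σ → Prop
  | _, _, .var v, ρ, α => α ∈ ρ _ v
  | _, _, .lam M, ρ, α => Sem M (REnv.cons α.1 ρ) α.2
  | _, _, @Tm.app _ σ _ M N, ρ, α =>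
      ∃ Y : Multiset (Web σ), Sem M ρ (Y, α) ∧ ∀ β ∈ Y, Sem N ρ β

/-- `RelType M α σ` (written `⊳ M : α : σ` in the paper): the point `α`
belongs to the relational interpretation of the closed term `M : σ`. -/
def RelType {σ : Ty} (M : Tm [] σ) (α : Web σ) : Prop := Sem M REnv.nil α

/-- The Church type of booleans `𝐁 = o → o → o`. -/
def TyB : Ty := Ty.arrow .o (Ty.arrow .o .o)

/-- The Church boolean `𝐭𝐫𝐮𝐞 = λx y. x`. -/
def churchTrue : Tm [] TyB := .lam (.lam (.var (.succ .zero)))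

/-- The Church boolean `𝐟𝐚𝐥𝐬𝐞 = λx y. y`. -/
def churchFalse : Tm [] TyB := .lam (.lam (.var .zero))

/-- The relational point `[∗] → ∅ → ∗` of the type `𝐁`. -/
def boolPoint (ast : Web Ty.o) : Web TyB := ({ast}, (0, ast))

mutual
  /-- NeutralForm simply-typed λ-terms: a variable applied to normal arguments. -/
  inductive NeutralForm : {Γ : List Ty} → {σ : Ty} → Tm Γ σ → Prop
    | var {Γ σ} (v : Var Γ σ) : NeutralForm (Tm.var v)
    | app {Γ σ τ} {M : Tm Γ (Ty.arrow σ τ)} {N : Tm Γ σ} :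
        NeutralForm M → NormalForm N → NeutralForm (M.app N)

  /-- Simply-typed λ-terms in (β-)normal form. -/
  inductive NormalForm : {Γ : List Ty} → {σ : Ty} → Tm Γ σ → Prop
    | of_neutral {Γ σ} {M : Tm Γ σ} : NeutralForm M → NormalForm M
    | lam {Γ σ τ} {M : Tm (σ :: Γ) τ} : NormalForm M → NormalForm M.lam
end

/-! ### S1: substitution calculus -/

theorem Ren.ext {Γ Δ : List Ty} {r r' : Ren Γ Δ} (h : ∀ σ v, r σ v = r' σ v) : r = r' :=
  funext fun σ => funext fun v => h σ v

theorem Subst.ext {Γ Δ : List Ty} {s s' : Subst Γ Δ} (h : ∀ σ v, s σ v = s' σ v) : s = s' :=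
  funext fun σ => funext fun v => h σ v

def Ren.id (Γ : List Ty) : Ren Γ Γ := fun _ v => v

def Ren.comp {Γ Δ Θ : List Ty} (r' : Ren Δ Θ) (r : Ren Γ Δ) : Ren Γ Θ :=
  fun σ v => r' σ (r σ v)

theorem Ren.lift_id (Γ : List Ty) (τ : Ty) : Ren.lift (Ren.id Γ) τ = Ren.id (τ :: Γ) := by
  apply Ren.ext; intro σ v; cases v <;> rfl

theorem rename_id {Γ : List Ty} {σ : Ty} (M : Tm Γ σ) : rename (Ren.id Γ) M = M := by
  induction M with
  | var v => rfl
  | lam M ih => simp [rename, Ren.lift_id, ih]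
  | app M N ihM ihN => simp [rename, ihM, ihN]

theorem Ren.lift_comp {Γ Δ Θ : List Ty} (r' : Ren Δ Θ) (r : Ren Γ Δ) (τ : Ty) :
    Ren.lift (Ren.comp r' r) τ = Ren.comp (Ren.lift r' τ) (Ren.lift r τ) := by
  apply Ren.ext; intro σ v; cases v <;> rfl

theorem rename_rename {Γ Δ Θ : List Ty} (r' : Ren Δ Θ) (r : Ren Γ Δ) {σ : Ty} (M : Tm Γ σ) :
    rename r' (rename r M) = rename (Ren.comp r' r) M := by
  induction M generalizing Δ Θ with
  | var v => rfl
  | lam M ih => simp [rename, ih, Ren.lift_comp]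
  | app M N ihM ihN => simp [rename, ihM, ihN]

def Subst.renComp {Γ Δ Θ : List Ty} (s : Subst Δ Θ) (r : Ren Γ Δ) : Subst Γ Θ :=
  fun σ v => s σ (r σ v)

def Subst.compRen {Γ Δ Θ : List Ty} (r : Ren Δ Θ) (s : Subst Γ Δ) : Subst Γ Θ :=
  fun σ v => rename r (s σ v)

def Subst.comp {Γ Δ Θ : List Ty} (s' : Subst Δ Θ) (s : Subst Γ Δ) : Subst Γ Θ :=
  fun σ v => subst s' (s σ v)

theorem Subst.lift_renComp {Γ Δ Θ : List Ty} (s : Subst Δ Θ) (r : Ren Γ Δ) (τ : Ty) :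
    Subst.lift (Subst.renComp s r) τ = Subst.renComp (Subst.lift s τ) (Ren.lift r τ) := by
  apply Subst.ext; intro σ v; cases v <;> rfl

theorem subst_rename {Γ Δ Θ : List Ty} (s : Subst Δ Θ) (r : Ren Γ Δ) {σ : Ty} (M : Tm Γ σ) :
    subst s (rename r M) = subst (Subst.renComp s r) M := by
  induction M generalizing Δ Θ with
  | var v => rfl
  | lam M ih => simp [rename, subst, ih, Subst.lift_renComp]
  | app M N ihM ihN => simp [rename, subst, ihM, ihN]

theorem Subst.lift_compRen {Γ Δ Θ : List Ty} (r : Ren Δ Θ) (s : Subst Γ Δ) (τ : Ty) :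
    Subst.lift (Subst.compRen r s) τ = Subst.compRen (Ren.lift r τ) (Subst.lift s τ) := by
  apply Subst.ext; intro σ v
  cases v with
  | zero => rfl
  | succ w =>
    show rename (fun _ u => Var.succ u) (rename r (s _ w))
       = rename (Ren.lift r τ) (rename (fun _ u => Var.succ u) (s _ w))
    erw [rename_rename, rename_rename]; rfl

theorem rename_subst {Γ Δ Θ : List Ty} (r : Ren Δ Θ) (s : Subst Γ Δ) {σ : Ty} (M : Tm Γ σ) :
    rename r (subst s M) = subst (Subst.compRen r s) M := by
  induction M generalizing Δ Θ with
  | var v => rfl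
  | lam M ih => simp [rename, subst, ih, Subst.lift_compRen]
  | app M N ihM ihN => simp [rename, subst, ihM, ihN]

theorem Subst.lift_comp {Γ Δ Θ : List Ty} (s' : Subst Δ Θ) (s : Subst Γ Δ) (τ : Ty) :
    Subst.lift (Subst.comp s' s) τ = Subst.comp (Subst.lift s' τ) (Subst.lift s τ) := by
  apply Subst.ext; intro σ v
  cases v with
  | zero => rfl
  | succ w =>
    show rename (fun _ u => Var.succ u) (subst s' (s _ w))
       = subst (Subst.lift s' τ) (rename (fun _ u => Var.succ u) (s _ w))
    erw [rename_subst, subst_rename]; rfl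

theorem subst_subst {Γ Δ Θ : List Ty} (s' : Subst Δ Θ) (s : Subst Γ Δ) {σ : Ty} (M : Tm Γ σ) :
    subst s' (subst s M) = subst (Subst.comp s' s) M := by
  induction M generalizing Δ Θ with
  | var v => rfl
  | lam M ih => simp [subst, ih, Subst.lift_comp]
  | app M N ihM ihN => simp [subst, ihM, ihN]

def Subst.ofRen {Γ Δ : List Ty} (r : Ren Γ Δ) : Subst Γ Δ := fun σ v => Tm.var (r σ v)

theorem Subst.lift_ofRen {Γ Δ : List Ty} (r : Ren Γ Δ) (τ : Ty) :
    Subst.lift (Subst.ofRen r) τ = Subst.ofRen (Ren.lift r τ) := by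
  apply Subst.ext; intro σ v; cases v <;> rfl

theorem subst_ofRen {Γ Δ : List Ty} (r : Ren Γ Δ) {σ : Ty} (M : Tm Γ σ) :
    subst (Subst.ofRen r) M = rename r M := by
  induction M generalizing Δ with
  | var v => rfl
  | lam M ih => simp [subst, rename, Subst.lift_ofRen, ih]
  | app M N ihM ihN => simp [subst, rename, ihM, ihN]

/-- Renaming commutes with single substitution. -/
theorem rename_subst1 {Γ Δ : List Ty} (r : Ren Γ Δ) {σ τ : Ty} (B : Tm (σ :: Γ) τ) (N : Tm Γ σ) :
    rename r (subst1 B N) = subst1 (rename (Ren.lift r σ) B) (rename r N) := by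
  show rename r (subst (Subst.cons N) B) = subst (Subst.cons (rename r N)) (rename (Ren.lift r σ) B)
  rw [rename_subst, subst_rename]
  congr 1
  apply Subst.ext; intro σ' v; cases v <;> rfl

/-- Substitution commutes with single substitution. -/
theorem subst_subst1 {Γ Δ : List Ty} (s : Subst Γ Δ) {σ τ : Ty} (B : Tm (σ :: Γ) τ) (N : Tm Γ σ) :
    subst s (subst1 B N) = subst1 (subst (Subst.lift s σ) B) (subst s N) := by
  show subst s (subst (Subst.cons N) B) = subst (Subst.cons (subst s N)) (subst (Subst.lift s σ) B)
  rw [subst_subst, subst_subst]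
  congr 1
  apply Subst.ext; intro σ' v
  cases v with
  | zero => rfl
  | succ w =>
    show subst s (Tm.var w) = subst (Subst.cons (subst s N)) (rename (fun _ u => Var.succ u) (s _ w))
    erw [subst_rename]
    show s σ' w = subst (Subst.renComp (Subst.cons (subst s N)) fun _ u => Var.succ u) (s σ' w)
    rw [show (Subst.renComp (Subst.cons (subst s N)) fun _ u => Var.succ u) = Subst.ofRen (Ren.id Δ)
      from Subst.ext (fun _ _ => rfl), subst_ofRen, rename_id]

def Subst.scons {Γ Δ : List Ty} {σ : Ty} (N : Tm Δ σ) (s : Subst Γ Δ) : Subst (σ :: Γ) Δ :=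
  fun _ v => match v with | .zero => N | .succ w => s _ w
/-! ### S2: β-reduction -/

inductive Red : {Γ : List Ty} → {σ : Ty} → Tm Γ σ → Tm Γ σ → Prop
  | beta {Γ σ τ} (B : Tm (σ :: Γ) τ) (N : Tm Γ σ) : Red (Tm.app B.lam N) (subst1 B N)
  | app1 {Γ σ τ} {M M' : Tm Γ (Ty.arrow σ τ)} {N : Tm Γ σ} : Red M M' → Red (M.app N) (M'.app N)
  | app2 {Γ σ τ} {M : Tm Γ (Ty.arrow σ τ)} {N N' : Tm Γ σ} : Red N N' → Red (M.app N) (M.app N')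
  | lam {Γ σ τ} {M M' : Tm (σ :: Γ) τ} : Red M M' → Red M.lam M'.lam

def RedStar {Γ : List Ty} {σ : Ty} : Tm Γ σ → Tm Γ σ → Prop := Relation.ReflTransGen Red

theorem RedStar.refl {Γ σ} {M : Tm Γ σ} : RedStar M M := Relation.ReflTransGen.refl

theorem RedStar.trans {Γ σ} {M N P : Tm Γ σ} : RedStar M N → RedStar N P → RedStar M P :=
  Relation.ReflTransGen.trans

theorem RedStar.single {Γ σ} {M N : Tm Γ σ} (h : Red M N) : RedStar M N :=
  Relation.ReflTransGen.single h

theorem RedStar.app1 {Γ σ τ} {M M' : Tm Γ (Ty.arrow σ τ)} {N : Tm Γ σ} (h : RedStar M M') :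
    RedStar (M.app N) (M'.app N) := by
  induction h with
  | refl => exact RedStar.refl
  | tail _ h2 ih => exact ih.trans (RedStar.single (Red.app1 h2))

theorem RedStar.app2 {Γ σ τ} {M : Tm Γ (Ty.arrow σ τ)} {N N' : Tm Γ σ} (h : RedStar N N') :
    RedStar (M.app N) (M.app N') := by
  induction h with
  | refl => exact RedStar.refl
  | tail _ h2 ih => exact ih.trans (RedStar.single (Red.app2 h2))

theorem RedStar.lamc {Γ σ τ} {M M' : Tm (σ :: Γ) τ} (h : RedStar M M') :
    RedStar M.lam M'.lam := by
  induction h with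
  | refl => exact RedStar.refl
  | tail _ h2 ih => exact ih.trans (RedStar.single (Red.lam h2))

theorem BetaEta.of_red {Γ σ} {M N : Tm Γ σ} (h : Red M N) : BetaEta M N := by
  induction h with
  | beta B N => exact BetaEta.beta B N
  | app1 _ ih => exact BetaEta.app_congr ih (BetaEta.refl _)
  | app2 _ ih => exact BetaEta.app_congr (BetaEta.refl _) ih
  | lam _ ih => exact BetaEta.lam_congr ih

theorem BetaEta.of_redStar {Γ σ} {M N : Tm Γ σ} (h : RedStar M N) : BetaEta M N := by
  induction h with
  | refl => exact BetaEta.refl _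
  | tail _ h2 ih => exact ih.trans (BetaEta.of_red h2)

theorem Red.renm {Γ Δ σ} {M N : Tm Γ σ} (r : Ren Γ Δ) (h : Red M N) :
    Red (_root_.rename r M) (_root_.rename r N) := by
  induction h generalizing Δ with
  | beta B N => rw [rename_subst1]; exact Red.beta _ _
  | app1 _ ih => exact Red.app1 (ih r)
  | app2 _ ih => exact Red.app2 (ih r)
  | lam _ ih => exact Red.lam (ih _)

theorem RedStar.renm {Γ Δ σ} {M N : Tm Γ σ} (r : Ren Γ Δ) (h : RedStar M N) :
    RedStar (_root_.rename r M) (_root_.rename r N) := by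
  induction h with
  | refl => exact RedStar.refl
  | tail _ h2 ih => exact ih.trans (RedStar.single (Red.renm r h2))

theorem normal_neutral_rename {Γ σ} (M : Tm Γ σ) :
    ∀ {Δ} (r : Ren Γ Δ), (NormalForm M → NormalForm (rename r M)) ∧
      (NeutralForm M → NeutralForm (rename r M)) := by
  induction M with
  | var v =>
    intro Δ r
    exact ⟨fun _ => NormalForm.of_neutral (NeutralForm.var _), fun _ => NeutralForm.var _⟩
  | lam M ih =>
    intro Δ r
    constructor
    · intro h
      cases h with
      | of_neutral h => cases h
      | lam h => exact NormalForm.lam ((ih _).1 h)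
    · intro h; cases h
  | app M N ihM ihN =>
    intro Δ r
    have key : NeutralForm (M.app N) → NeutralForm (rename r (M.app N)) := by
      intro h
      cases h with
      | app hM hN => exact NeutralForm.app ((ihM r).2 hM) ((ihN r).1 hN)
    refine ⟨fun h => ?_, key⟩
    cases h with
    | of_neutral h => exact NormalForm.of_neutral (key h)

/-! ### S3: weak normalization (Tait) -/

def WN {Γ σ} (M : Tm Γ σ) : Prop := ∃ P, RedStar M P ∧ NormalForm P
def WNe {Γ σ} (M : Tm Γ σ) : Prop := ∃ P, RedStar M P ∧ NeutralForm P

theorem WN.renm {Γ Δ σ} {M : Tm Γ σ} (r : Ren Γ Δ) (h : WN M) : WN (_root_.rename r M) := by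
  obtain ⟨P, h1, h2⟩ := h
  exact ⟨rename r P, RedStar.renm r h1, (normal_neutral_rename P r).1 h2⟩

def RED : (σ : Ty) → {Γ : List Ty} → Tm Γ σ → Prop
  | .o, _, M => WN M
  | .arrow σ τ, Γ, M =>
      WN M ∧ ∀ Δ (r : Ren Γ Δ) (N : Tm Δ σ), RED σ N → RED τ (Tm.app (rename r M) N)

theorem RED.wn {σ Γ} {M : Tm Γ σ} (h : RED σ M) : WN M := by
  cases σ with
  | o => exact h
  | arrow σ τ => exact h.1

theorem RED.renm {σ} : ∀ {Γ Δ} (r : Ren Γ Δ) {M : Tm Γ σ}, RED σ M → RED σ (_root_.rename r M) := by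
  induction σ with
  | o => intro Γ Δ r M h; exact WN.renm r h
  | arrow σ τ ihσ ihτ =>
    intro Γ Δ r M h
    refine ⟨WN.renm r h.1, fun Θ r' N hN => ?_⟩
    rw [rename_rename]
    exact h.2 Θ (Ren.comp r' r) N hN

theorem RED.expand {σ} : ∀ {Γ} {M M' : Tm Γ σ}, Red M M' → RED σ M' → RED σ M := by
  induction σ with
  | o =>
    intro Γ M M' hr h
    obtain ⟨P, h1, h2⟩ := h
    exact ⟨P, (RedStar.single hr).trans h1, h2⟩
  | arrow σ τ ihσ ihτ =>
    intro Γ M M' hr h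
    refine ⟨?_, fun Δ r N hN => ihτ (Red.app1 (Red.renm r hr)) (h.2 Δ r N hN)⟩
    obtain ⟨P, h1, h2⟩ := h.1
    exact ⟨P, (RedStar.single hr).trans h1, h2⟩

theorem RED.wne {σ} : ∀ {Γ} {M : Tm Γ σ}, WNe M → RED σ M := by
  induction σ with
  | o =>
    intro Γ M h
    obtain ⟨P, h1, h2⟩ := h
    exact ⟨P, h1, NormalForm.of_neutral h2⟩
  | arrow σ τ ihσ ihτ =>
    intro Γ M h
    obtain ⟨P, h1, h2⟩ := h
    refine ⟨⟨P, h1, NormalForm.of_neutral h2⟩, fun Δ r N hN => ?_⟩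
    obtain ⟨Q, hq1, hq2⟩ := hN.wn
    refine ihτ ⟨Tm.app (rename r P) Q, ?_, NeutralForm.app ((normal_neutral_rename P r).2 h2) hq2⟩
    exact (RedStar.app1 (RedStar.renm r h1)).trans (RedStar.app2 hq1)

theorem RED.var {σ Γ} (v : Var Γ σ) : RED σ (Tm.var v) :=
  RED.wne ⟨Tm.var v, RedStar.refl, NeutralForm.var v⟩

theorem subst_congr {Γ Δ : List Ty} {s s' : Subst Γ Δ} (h : ∀ σ v, s σ v = s' σ v)
    {σ : Ty} (M : Tm Γ σ) : subst s M = subst s' M := by rw [Subst.ext h]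

theorem RED.fund {Γ σ} (M : Tm Γ σ) :
    ∀ {Δ} (s : Subst Γ Δ), (∀ τ v, RED τ (s τ v)) → RED σ (subst s M) := by
  induction M with
  | var v => intro Δ s hs; exact hs _ v
  | app M N ihM ihN =>
    intro Δ s hs
    have h := (ihM s hs).2 Δ (Ren.id Δ) (subst s N) (ihN s hs)
    rwa [rename_id] at h
  | @lam Γ σ τ M ih =>
    intro Δ s hs
    have hlift : ∀ {Θ} (s' : Subst Γ Θ), (∀ τ' v, RED τ' (s' τ' v)) →
        (∀ τ' v, RED τ' (Subst.lift s' σ τ' v)) := by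
      intro Θ s' hs' τ' v
      cases v with
      | zero => exact RED.var _
      | succ w => exact RED.renm _ (hs' _ w)
    constructor
    · obtain ⟨P, h1, h2⟩ := (ih (Subst.lift s σ) (hlift s hs)).wn
      exact ⟨P.lam, RedStar.lamc h1, NormalForm.lam h2⟩
    · intro Θ r N hN
      show RED τ (Tm.app (rename r (Tm.lam (subst (Subst.lift s σ) M))) N)
      have hstep : Red (Tm.app (rename r (Tm.lam (subst (Subst.lift s σ) M))) N)
          (subst1 (rename (Ren.lift r σ) (subst (Subst.lift s σ) M)) N) := by
        exact Red.beta _ _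
      refine RED.expand hstep ?_
      have : subst1 (rename (Ren.lift r σ) (subst (Subst.lift s σ) M)) N
          = subst (Subst.scons N (Subst.compRen r s)) M := by
        show subst (Subst.cons N) (rename (Ren.lift r σ) (subst (Subst.lift s σ) M)) = _
        rw [subst_rename, subst_subst]
        apply subst_congr
        intro τ' v
        cases v with
        | zero => rfl
        | succ w =>
          show subst (Subst.renComp (Subst.cons N) (Ren.lift r σ)) (rename (fun _ u => Var.succ u) (s _ w)) = _
          erw [subst_rename]
          show subst (fun τ'' u => Tm.var (r τ'' u)) (s _ w) = _
          rw [show (fun τ'' u => Tm.var (r τ'' u)) = Subst.ofRen r from rfl, subst_ofRen]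
          rfl
      rw [this]
      apply ih
      intro τ' v
      cases v with
      | zero => exact hN
      | succ w => exact RED.renm r (hs _ w)

theorem weak_normalization {Γ σ} (M : Tm Γ σ) : WN M := by
  have h := RED.fund M (Subst.ofRen (Ren.id Γ)) (fun τ v => RED.var v)
  rw [subst_ofRen, rename_id] at h
  exact h.wn
/-! ### S4: lemmas about the relational semantics -/

def REnv.le {Γ : List Ty} (ρ ρ' : REnv Γ) : Prop := ∀ σ v, ∀ x ∈ ρ σ v, x ∈ ρ' σ v

theorem REnv.le.refl {Γ} (ρ : REnv Γ) : REnv.le ρ ρ := fun _ _ _ h => h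

theorem REnv.le.trans {Γ} {ρ₁ ρ₂ ρ₃ : REnv Γ} (h : REnv.le ρ₁ ρ₂) (h' : REnv.le ρ₂ ρ₃) :
    REnv.le ρ₁ ρ₃ := fun σ v x hx => h' σ v x (h σ v x hx)

def REnv.zeroE (Γ : List Ty) : REnv Γ := fun _ _ => 0

def REnv.add {Γ : List Ty} (ρ ρ' : REnv Γ) : REnv Γ := fun σ v => ρ σ v + ρ' σ v

theorem REnv.le_add_left {Γ} (ρ ρ' : REnv Γ) : REnv.le ρ (REnv.add ρ ρ') :=
  fun σ v x hx => Multiset.mem_add.2 (Or.inl hx)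

theorem REnv.le_add_right {Γ} (ρ ρ' : REnv Γ) : REnv.le ρ' (REnv.add ρ ρ') :=
  fun σ v x hx => Multiset.mem_add.2 (Or.inr hx)

theorem REnv.cons_le_cons {Γ σ} {X X' : Multiset (Web σ)} {ρ ρ' : REnv Γ}
    (hX : ∀ x ∈ X, x ∈ X') (h : REnv.le ρ ρ') : REnv.le (REnv.cons X ρ) (REnv.cons X' ρ') := by
  intro τ v x hx
  cases v with
  | zero => exact hX x hx
  | succ w => exact h τ w x hx

def REnv.single : {Γ : List Ty} → {σ : Ty} → Var Γ σ → Multiset (Web σ) → REnv Γ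
  | _, _, .zero, X => REnv.cons X (REnv.zeroE _)
  | _, _, .succ w, X => REnv.cons 0 (REnv.single w X)

theorem REnv.single_spec {Γ : List Ty} {σ : Ty} (v : Var Γ σ) (X : Multiset (Web σ))
    (P : ∀ τ, Var Γ τ → Web τ → Prop) (hX : ∀ β ∈ X, P σ v β) :
    ∀ τ w β, β ∈ REnv.single v X τ w → P τ w β := by
  induction v with
  | zero =>
    intro τ w β hβ
    cases w with
    | zero => exact hX β hβ
    | succ w => exact absurd hβ (Multiset.notMem_zero β)
  | succ v ih =>
    intro τ w β hβ
    cases w with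
    | zero => exact absurd hβ (Multiset.notMem_zero β)
    | succ w => exact ih X (fun τ w => P τ w.succ) hX τ w β hβ

theorem REnv.mem_single_self {Γ : List Ty} {σ : Ty} (v : Var Γ σ) (X : Multiset (Web σ)) :
    ∀ β ∈ X, β ∈ REnv.single v X σ v := by
  induction v with
  | zero => intro β hβ; exact hβ
  | succ v ih => intro β hβ; exact ih X β hβ

theorem Sem.mono {Γ : List Ty} {σ : Ty} (M : Tm Γ σ) :
    ∀ {ρ ρ' : REnv Γ}, REnv.le ρ ρ' → ∀ {α}, Sem M ρ α → Sem M ρ' α := by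
  induction M with
  | var v => intro ρ ρ' h α hα; exact h _ v α hα
  | lam M ih =>
    intro ρ ρ' h α hα
    exact ih (REnv.cons_le_cons (fun x hx => hx) h) hα
  | app M N ihM ihN =>
    intro ρ ρ' h α hα
    obtain ⟨Y, h1, h2⟩ := hα
    exact ⟨Y, ihM h h1, fun β hβ => ihN h (h2 β hβ)⟩

def REnv.comp {Γ Δ : List Ty} (r : Ren Γ Δ) (ρ : REnv Δ) : REnv Γ := fun σ v => ρ σ (r σ v)

theorem REnv.comp_lift_cons {Γ Δ : List Ty} (r : Ren Γ Δ) (ρ : REnv Δ) {σ : Ty}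
    (X : Multiset (Web σ)) :
    REnv.comp (Ren.lift r σ) (REnv.cons X ρ) = REnv.cons X (REnv.comp r ρ) := by
  funext τ v; cases v <;> rfl

theorem Sem.renm {Γ : List Ty} {σ : Ty} (M : Tm Γ σ) :
    ∀ {Δ : List Ty} (r : Ren Γ Δ) (ρ : REnv Δ) (α : Web σ),
      Sem (rename r M) ρ α ↔ Sem M (REnv.comp r ρ) α := by
  induction M with
  | var v => intro Δ r ρ α; exact Iff.rfl
  | lam M ih =>
    intro Δ r ρ α
    show Sem (rename (Ren.lift r _) M) (REnv.cons α.1 ρ) α.2 ↔ _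
    rw [ih, REnv.comp_lift_cons]
    exact Iff.rfl
  | app M N ihM ihN =>
    intro Δ r ρ α
    show (∃ Y, Sem (rename r M) ρ (Y, α) ∧ ∀ β ∈ Y, Sem (rename r N) ρ β) ↔
      (∃ Y, Sem M (REnv.comp r ρ) (Y, α) ∧ ∀ β ∈ Y, Sem N (REnv.comp r ρ) β)
    exact exists_congr fun Y => and_congr (ihM r ρ _) (forall_congr' fun β => imp_congr_right
      fun _ => ihN r ρ β)

def REnv.tail {Γ : List Ty} {σ : Ty} (ρ : REnv (σ :: Γ)) : REnv Γ := fun τ v => ρ τ v.succ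

/-- The substitution lemma for the relational semantics. -/
theorem Sem.subst_iff {Γ : List Ty} {σ : Ty} (M : Tm Γ σ) :
    ∀ {Δ : List Ty} (s : Subst Γ Δ) (ρ : REnv Δ) (α : Web σ),
      Sem (subst s M) ρ α ↔
        ∃ ρ' : REnv Γ, (∀ τ v, ∀ β ∈ ρ' τ v, Sem (s τ v) ρ β) ∧ Sem M ρ' α := by
  induction M with
  | var v =>
    intro Δ s ρ α
    constructor
    · intro h
      refine ⟨REnv.single v {α}, ?_, REnv.mem_single_self v {α} α (Multiset.mem_singleton_self α)⟩
      exact REnv.single_spec v {α} (fun τ w β => Sem (s τ w) ρ β)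
        (fun β hβ => by rwa [Multiset.mem_singleton.1 hβ])
    · rintro ⟨ρ', h1, h2⟩
      exact h1 _ v α h2
  | @lam Γ' σ' τ' M ih =>
    intro Δ s ρ α
    constructor
    · intro h
      obtain ⟨ρ'', h1, h2⟩ := (ih (Subst.lift s σ') (REnv.cons α.1 ρ) α.2).1 h
      refine ⟨REnv.tail ρ'', fun τ v β hβ => ?_, ?_⟩
      · have := h1 τ v.succ β hβ
        erw [show Subst.lift s σ' τ v.succ = rename (fun _ u => Var.succ u) (s τ v) from rfl,
          Sem.renm] at this; exact this
      · show Sem M (REnv.cons α.1 (REnv.tail ρ'')) α.2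
        refine Sem.mono M ?_ h2
        intro τ v x hx
        cases v with
        | zero => exact h1 σ' Var.zero x hx
        | succ w => exact hx
    · rintro ⟨ρ', h1, h2⟩
      show Sem (subst (Subst.lift s σ') M) (REnv.cons α.1 ρ) α.2
      refine (ih (Subst.lift s σ') (REnv.cons α.1 ρ) α.2).2 ⟨REnv.cons α.1 ρ', fun τ v β hβ => ?_, h2⟩
      cases v with
      | zero => exact hβ
      | succ w =>
        erw [show Subst.lift s σ' τ w.succ = rename (fun _ u => Var.succ u) (s τ w) from rfl,
          Sem.renm]
        exact h1 τ w β hβ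
  | @app Γ' σ' τ' M N ihM ihN =>
    intro Δ s ρ α
    constructor
    · rintro ⟨Y, h1, h2⟩
      obtain ⟨ρ₁, hρ₁, hM⟩ := (ihM s ρ (Y, α)).1 h1
      have claim : ∀ Y' : Multiset (Web σ'), (∀ β ∈ Y', Sem (subst s N) ρ β) →
          ∃ ρ₂ : REnv Γ', (∀ τ v, ∀ β ∈ ρ₂ τ v, Sem (s τ v) ρ β) ∧ ∀ β ∈ Y', Sem N ρ₂ β := by
        intro Y'
        induction Y' using Multiset.induction_on with
        | empty =>
          intro _
          exact ⟨REnv.zeroE Γ', fun τ v β hβ => absurd hβ (Multiset.notMem_zero β),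
            fun β hβ => absurd hβ (Multiset.notMem_zero β)⟩
        | cons γ Y' ihY =>
          intro h
          obtain ⟨ρ₂, hρ₂, hN⟩ := ihY (fun β hβ => h β (Multiset.mem_cons_of_mem hβ))
          obtain ⟨ρ₃, hρ₃, hγ⟩ := (ihN s ρ γ).1 (h γ (Multiset.mem_cons_self γ Y'))
          refine ⟨REnv.add ρ₂ ρ₃, fun τ v β hβ => ?_, fun β hβ => ?_⟩
          · rcases Multiset.mem_add.1 hβ with hβ | hβ
            · exact hρ₂ τ v β hβ
            · exact hρ₃ τ v β hβ
          · rcases Multiset.mem_cons.1 hβ with rfl | hβ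
            · exact Sem.mono N (REnv.le_add_right ρ₂ ρ₃) hγ
            · exact Sem.mono N (REnv.le_add_left ρ₂ ρ₃) (hN β hβ)
      obtain ⟨ρ₂, hρ₂, hN⟩ := claim Y h2
      refine ⟨REnv.add ρ₁ ρ₂, fun τ v β hβ => ?_, ?_⟩
      · rcases Multiset.mem_add.1 hβ with hβ | hβ
        · exact hρ₁ τ v β hβ
        · exact hρ₂ τ v β hβ
      · exact ⟨Y, Sem.mono M (REnv.le_add_left ρ₁ ρ₂) hM,
          fun β hβ => Sem.mono N (REnv.le_add_right ρ₁ ρ₂) (hN β hβ)⟩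
    · rintro ⟨ρ', h1, ⟨Y, hM, hN⟩⟩
      exact ⟨Y, (ihM s ρ (Y, α)).2 ⟨ρ', h1, hM⟩,
        fun β hβ => (ihN s ρ β).2 ⟨ρ', h1, hN β hβ⟩⟩

theorem Sem.beta_iff {Γ : List Ty} {σ τ : Ty} (B : Tm (σ :: Γ) τ) (N : Tm Γ σ)
    (ρ : REnv Γ) (α : Web τ) :
    Sem (Tm.app B.lam N) ρ α ↔ Sem (subst1 B N) ρ α := by
  rw [show subst1 B N = subst (Subst.cons N) B from rfl, Sem.subst_iff]
  constructor
  · rintro ⟨Y, h1, h2⟩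
    refine ⟨REnv.cons Y ρ, fun τ' v β hβ => ?_, h1⟩
    cases v with
    | zero => exact h2 β hβ
    | succ w => exact hβ
  · rintro ⟨ρ', h1, h2⟩
    refine ⟨ρ' σ Var.zero, Sem.mono B ?_ h2, fun β hβ => h1 σ Var.zero β hβ⟩
    intro τ' v x hx
    cases v with
    | zero => exact hx
    | succ w => exact h1 τ' w.succ x hx

theorem Sem.red_iff {Γ : List Ty} {σ : Ty} {M N : Tm Γ σ} (h : Red M N) :
    ∀ (ρ : REnv Γ) (α : Web σ), Sem M ρ α ↔ Sem N ρ α := by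
  induction h with
  | beta B N => exact Sem.beta_iff B N
  | @app1 _ _ _ _ _ N _ ih =>
    intro ρ α
    exact exists_congr fun Y => and_congr (ih ρ (Y, α)) Iff.rfl
  | @app2 _ _ _ M _ _ _ ih =>
    intro ρ α
    exact exists_congr fun Y => and_congr Iff.rfl
      (forall_congr' fun β => imp_congr_right fun _ => ih ρ β)
  | lam _ ih => intro ρ α; exact ih _ _

theorem Sem.redStar_iff {Γ : List Ty} {σ : Ty} {M N : Tm Γ σ} (h : RedStar M N) :
    ∀ (ρ : REnv Γ) (α : Web σ), Sem M ρ α ↔ Sem N ρ α := by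
  induction h with
  | refl => intro ρ α; exact Iff.rfl
  | tail _ h2 ih => intro ρ α; exact (ih ρ α).trans (Sem.red_iff h2 ρ α)
/-! ### S5: canonical (η-long β-normal) forms -/

mutual
  inductive CNf : List Ty → Ty → Type
    | lam {Γ σ τ} : CNf (σ :: Γ) τ → CNf Γ (Ty.arrow σ τ)
    | ne {Γ} : CNe Γ Ty.o → CNf Γ Ty.o
  inductive CNe : List Ty → Ty → Type
    | var {Γ σ} : Var Γ σ → CNe Γ σ
    | app {Γ σ τ} : CNe Γ (Ty.arrow σ τ) → CNf Γ σ → CNe Γ τ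
end

mutual
  def renCNf : {Γ Δ : List Ty} → Ren Γ Δ → {σ : Ty} → CNf Γ σ → CNf Δ σ
    | _, _, r, _, .lam C => .lam (renCNf (Ren.lift r _) C)
    | _, _, r, _, .ne E => .ne (renCNe r E)
  def renCNe : {Γ Δ : List Ty} → Ren Γ Δ → {σ : Ty} → CNe Γ σ → CNe Δ σ
    | _, _, r, _, .var v => .var (r _ v)
    | _, _, r, _, .app E C => .app (renCNe r E) (renCNf r C)
end

mutual
  def sizeNf : {Γ : List Ty} → {σ : Ty} → CNf Γ σ → ℕ
    | _, _, .lam C => sizeNf C + 1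
    | _, _, .ne E => sizeNe E + 1
  def sizeNe : {Γ : List Ty} → {σ : Ty} → CNe Γ σ → ℕ
    | _, _, .var _ => 1
    | _, _, .app E C => sizeNe E + sizeNf C + 1
end

mutual
  def embNf : {Γ : List Ty} → {σ : Ty} → CNf Γ σ → Tm Γ σ
    | _, _, .lam C => .lam (embNf C)
    | _, _, .ne E => embNe E
  def embNe : {Γ : List Ty} → {σ : Ty} → CNe Γ σ → Tm Γ σ
    | _, _, .var v => .var v
    | _, _, .app E C => .app (embNe E) (embNf C)
end

mutual
  theorem renCNf_comp : ∀ {Γ Δ Θ : List Ty} (r' : Ren Δ Θ) (r : Ren Γ Δ) {σ : Ty} (C : CNf Γ σ),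
      renCNf r' (renCNf r C) = renCNf (Ren.comp r' r) C
    | _, _, _, r', r, _, .lam C => by
        show CNf.lam (renCNf (Ren.lift r' _) (renCNf (Ren.lift r _) C)) = _
        rw [renCNf_comp, ← Ren.lift_comp]; rfl
    | _, _, _, r', r, _, .ne E => by
        show CNf.ne (renCNe r' (renCNe r E)) = _
        rw [renCNe_comp]; rfl
  theorem renCNe_comp : ∀ {Γ Δ Θ : List Ty} (r' : Ren Δ Θ) (r : Ren Γ Δ) {σ : Ty} (E : CNe Γ σ),
      renCNe r' (renCNe r E) = renCNe (Ren.comp r' r) E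
    | _, _, _, r', r, _, .var v => rfl
    | _, _, _, r', r, _, .app E C => by
        show CNe.app (renCNe r' (renCNe r E)) (renCNf r' (renCNf r C)) = _
        rw [renCNe_comp, renCNf_comp]; rfl
end

mutual
  theorem embNf_ren : ∀ {Γ Δ : List Ty} (r : Ren Γ Δ) {σ : Ty} (C : CNf Γ σ),
      embNf (renCNf r C) = rename r (embNf C)
    | _, _, r, _, .lam C => by
        show Tm.lam (embNf (renCNf (Ren.lift r _) C)) = _
        rw [embNf_ren]; rfl
    | _, _, r, _, .ne E => by
        show embNe (renCNe r E) = _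
        rw [embNe_ren]; rfl
  theorem embNe_ren : ∀ {Γ Δ : List Ty} (r : Ren Γ Δ) {σ : Ty} (E : CNe Γ σ),
      embNe (renCNe r E) = rename r (embNe E)
    | _, _, r, _, .var v => rfl
    | _, _, r, _, .app E C => by
        show Tm.app (embNe (renCNe r E)) (embNf (renCNf r C)) = _
        rw [embNe_ren, embNf_ren]; rfl
end

/-- η-expansion of a canonical neutral into a canonical normal form. -/
def expand : {σ : Ty} → {Γ : List Ty} → CNe Γ σ → CNf Γ σ
  | .o, _, E => .ne E
  | .arrow σ τ, _, E =>
      .lam (expand (CNe.app (renCNe (fun _ v => Var.succ v) E) (expand (CNe.var Var.zero))))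

/-- Renaming commutes with η-expansion. -/
theorem renCNf_expand : ∀ {σ : Ty} {Γ Δ : List Ty} (r : Ren Γ Δ) (E : CNe Γ σ),
    renCNf r (expand E) = expand (renCNe r E) := by
  intro σ
  induction σ with
  | o => intro Γ Δ r E; rfl
  | arrow σ τ ihσ ihτ =>
    intro Γ Δ r E
    have h1 : renCNe (Ren.lift r σ) (renCNe (fun _ v => Var.succ v) E)
        = renCNe (fun _ v => Var.succ v) (renCNe r E) := by
      erw [renCNe_comp, renCNe_comp]; rfl
    have h2 : renCNf (Ren.lift r σ) (expand (CNe.var Var.zero)) = expand (CNe.var Var.zero) := by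
      rw [ihσ]; rfl
    show CNf.lam (renCNf (Ren.lift r σ)
        (expand (CNe.app (renCNe (fun _ v => Var.succ v) E) (expand (CNe.var Var.zero))))) = _
    rw [ihτ]
    show CNf.lam (expand (CNe.app (renCNe (Ren.lift r σ) (renCNe (fun _ v => Var.succ v) E))
        (renCNf (Ren.lift r σ) (expand (CNe.var Var.zero))))) = _
    rw [h1, h2]
    rfl

mutual
  def toCNf : {Γ : List Ty} → {σ : Ty} → Tm Γ σ → Option (CNf Γ σ)
    | _, _, .var v => some (expand (.var v))
    | _, _, .lam M => (toCNf M).map .lam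
    | _, _, .app M N =>
        match toCNe M, toCNf N with
        | some E, some C => some (expand (.app E C))
        | _, _ => none
  def toCNe : {Γ : List Ty} → {σ : Ty} → Tm Γ σ → Option (CNe Γ σ)
    | _, _, .var v => some (.var v)
    | _, _, .lam _ => none
    | _, _, .app M N =>
        match toCNe M, toCNf N with
        | some E, some C => some (.app E C)
        | _, _ => none
end

theorem toCNf_var {Γ : List Ty} {σ : Ty} (v : Var Γ σ) :
    toCNf (Tm.var v) = some (expand (CNe.var v)) := by simp [toCNf]

theorem toCNf_lam {Γ : List Ty} {σ τ : Ty} (M : Tm (σ :: Γ) τ) :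
    toCNf (Tm.lam M) = (toCNf M).map CNf.lam := by simp [toCNf]

theorem toCNf_app {Γ : List Ty} {σ τ : Ty} (M : Tm Γ (Ty.arrow σ τ)) (N : Tm Γ σ) :
    toCNf (M.app N) = match toCNe M, toCNf N with
      | some E, some C => some (expand (CNe.app E C)) | _, _ => none := by
  simp only [toCNf]
  cases toCNe M <;> cases toCNf N <;> rfl

theorem toCNe_var {Γ : List Ty} {σ : Ty} (v : Var Γ σ) :
    toCNe (Tm.var v) = some (CNe.var v) := by simp [toCNe]

theorem toCNe_app {Γ : List Ty} {σ τ : Ty} (M : Tm Γ (Ty.arrow σ τ)) (N : Tm Γ σ) :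
    toCNe (M.app N) = match toCNe M, toCNf N with
      | some E, some C => some (CNe.app E C) | _, _ => none := by
  simp only [toCNe]
  cases toCNe M <;> cases toCNf N <;> rfl

theorem toC_total {Γ : List Ty} {σ : Ty} (M : Tm Γ σ) :
    (NormalForm M → ∃ C, toCNf M = some C) ∧ (NeutralForm M → ∃ E, toCNe M = some E) := by
  induction M with
  | var v => exact ⟨fun _ => ⟨_, rfl⟩, fun _ => ⟨_, rfl⟩⟩
  | lam M ih =>
    constructor
    · intro h
      have hM : NormalForm M := by cases h with
        | of_neutral h => cases h
        | lam h => exact h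
      obtain ⟨C, hC⟩ := ih.1 hM
      exact ⟨C.lam, by rw [toCNf_lam, hC]; rfl⟩
    · intro h; cases h
  | app M N ihM ihN =>
    have key : NeutralForm (M.app N) → ∃ E, toCNe (M.app N) = some E := by
      intro h
      cases h with
      | app hM hN =>
        obtain ⟨E, hE⟩ := ihM.2 hM
        obtain ⟨C, hC⟩ := ihN.1 hN
        exact ⟨E.app C, by rw [toCNe_app]; rw [hE, hC]⟩
    constructor
    · intro h
      cases h with
      | of_neutral h =>
        obtain ⟨E, hE⟩ := key h
        refine ⟨expand E, ?_⟩
        rw [toCNe_app] at hE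
        rw [toCNf_app]
        revert hE
        cases toCNe M <;> cases toCNf N <;> intro hE <;> simp_all
    · exact key

/-- βη-conversion is stable under renaming. -/
theorem BetaEta.renm {Γ : List Ty} {σ : Ty} {M N : Tm Γ σ} (h : BetaEta M N) :
    ∀ {Δ : List Ty} (r : Ren Γ Δ), BetaEta (rename r M) (rename r N) := by
  induction h with
  | refl M => intro Δ r; exact BetaEta.refl _
  | symm _ ih => intro Δ r; exact (ih r).symm
  | trans _ _ ih1 ih2 => intro Δ r; exact (ih1 r).trans (ih2 r)
  | app_congr _ _ ih1 ih2 => intro Δ r; exact BetaEta.app_congr (ih1 r) (ih2 r)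
  | lam_congr _ ih => intro Δ r; exact BetaEta.lam_congr (ih _)
  | beta B N => intro Δ r; rw [rename_subst1]; exact BetaEta.beta _ _
  | @eta Γ' σ' τ' M =>
    intro Δ r
    show BetaEta (rename r M) (Tm.lam (Tm.app (rename (Ren.lift r σ') (rename (fun _ v => Var.succ v) M)) (Tm.var Var.zero)))
    erw [rename_rename, show Ren.comp (Ren.lift r σ') (fun _ v => Var.succ v) = Ren.comp (fun _ v => Var.succ v) r from rfl, ← rename_rename (fun _ v => Var.succ v) r M]
    exact BetaEta.eta _

/-- A term βη-equal to a canonical neutral is βη-equal to its η-expansion. -/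
theorem betaEta_expand : ∀ (σ : Ty) {Γ : List Ty} (T : Tm Γ σ) (E : CNe Γ σ),
    BetaEta T (embNe E) → BetaEta T (embNf (expand E)) := by
  intro σ
  induction σ with
  | o => intro Γ T E h; exact h
  | arrow σ τ ihσ ihτ =>
    intro Γ T E h
    show BetaEta T (Tm.lam (embNf (expand (CNe.app (renCNe (fun _ v => Var.succ v) E) (expand (CNe.var Var.zero))))))
    refine (BetaEta.eta T).trans (BetaEta.lam_congr ?_)
    refine ihτ _ _ ?_
    show BetaEta (Tm.app (rename (fun _ v => Var.succ v) T) (Tm.var Var.zero))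
      (Tm.app (embNe (renCNe (fun _ v => Var.succ v) E)) (embNf (expand (CNe.var Var.zero))))
    erw [embNe_ren]
    exact BetaEta.app_congr (h.renm _) (ihσ _ (CNe.var Var.zero) (BetaEta.refl _))

theorem toC_betaEta {Γ : List Ty} {σ : Ty} (M : Tm Γ σ) :
    (∀ C, toCNf M = some C → BetaEta M (embNf C)) ∧
    (∀ E, toCNe M = some E → BetaEta M (embNe E)) := by
  induction M with
  | var v =>
    constructor
    · intro C hC
      rw [toCNf_var] at hC
      cases hC
      exact betaEta_expand _ _ _ (BetaEta.refl _)
    · intro E hE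
      rw [toCNe_var] at hE
      cases hE
      exact BetaEta.refl _
  | lam M ih =>
    constructor
    · intro C hC
      rw [toCNf_lam] at hC
      cases hM : toCNf M with
      | none => rw [hM] at hC; cases hC
      | some C' =>
        rw [hM] at hC
        cases hC
        exact BetaEta.lam_congr (ih.1 C' hM)
    · intro E hE; cases hE
  | app M N ihM ihN =>
    have hr := toCNe_app M N
    have hf := toCNf_app M N
    have key : ∀ E, toCNe (M.app N) = some E → BetaEta (M.app N) (embNe E) := by
      intro E hE
      rw [hr] at hE
      cases hM : toCNe M with
      | none => rw [hM] at hE; cases hE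
      | some E' =>
        cases hN : toCNf N with
        | none => rw [hM, hN] at hE; cases hE
        | some C' =>
          rw [hM, hN] at hE
          cases hE
          exact BetaEta.app_congr (ihM.2 E' hM) (ihN.1 C' hN)
    constructor
    · intro C hC
      rw [hf] at hC
      cases hM : toCNe M with
      | none => rw [hM] at hC; cases hC
      | some E' =>
        cases hN : toCNf N with
        | none => rw [hM, hN] at hC; cases hC
        | some C' =>
          rw [hM, hN] at hC
          cases hC
          refine betaEta_expand _ _ _ (key (CNe.app E' C') ?_)
          rw [hr, hM, hN]
    · exact key

theorem REnv.comp_succ_cons {Γ : List Ty} {σ : Ty} (X : Multiset (Web σ)) (ρ : REnv Γ) :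
    REnv.comp (fun _ v => Var.succ v) (REnv.cons X ρ) = ρ := by
  funext τ v; rfl

/-- Semantic covariance of η-expansion. -/
theorem sem_expand : ∀ (σ : Ty) {Γ : List Ty} (E : CNe Γ σ) (ρ : REnv Γ) (α : Web σ),
    Sem (embNe E) ρ α → Sem (embNf (expand E)) ρ α := by
  intro σ
  induction σ with
  | o => intro Γ E ρ α h; exact h
  | arrow σ τ ihσ ihτ =>
    intro Γ E ρ α h
    show Sem (embNf (expand (CNe.app (renCNe (fun _ v => Var.succ v) E) (expand (CNe.var Var.zero)))))
      (REnv.cons α.1 ρ) α.2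
    refine ihτ _ _ _ ?_
    show ∃ Y, Sem (embNe (renCNe (fun _ v => Var.succ v) E)) (REnv.cons α.1 ρ) (Y, α.2) ∧
      ∀ β ∈ Y, Sem (embNf (expand (CNe.var Var.zero))) (REnv.cons α.1 ρ) β
    refine ⟨α.1, ?_, fun β hβ => ihσ (CNe.var Var.zero) (REnv.cons α.1 ρ) β hβ⟩
    erw [embNe_ren, Sem.renm, REnv.comp_succ_cons]
    exact h

theorem sem_toC {Γ : List Ty} {σ : Ty} (M : Tm Γ σ) :
    (∀ C, toCNf M = some C → ∀ ρ α, Sem M ρ α → Sem (embNf C) ρ α) ∧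
    (∀ E, toCNe M = some E → ∀ ρ α, Sem M ρ α → Sem (embNe E) ρ α) := by
  induction M with
  | var v =>
    constructor
    · intro C hC ρ α h
      rw [toCNf_var] at hC
      cases hC
      exact sem_expand _ _ _ _ h
    · intro E hE ρ α h
      rw [toCNe_var] at hE
      cases hE
      exact h
  | lam M ih =>
    constructor
    · intro C hC ρ α h
      rw [toCNf_lam] at hC
      cases hM : toCNf M with
      | none => rw [hM] at hC; cases hC
      | some C' =>
        rw [hM] at hC
        cases hC
        exact ih.1 C' hM _ _ h
    · intro E hE; cases hE
  | app M N ihM ihN =>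
    have key : ∀ E, toCNe (M.app N) = some E → ∀ ρ α, Sem (M.app N) ρ α → Sem (embNe E) ρ α := by
      intro E hE ρ α h
      rw [toCNe_app] at hE
      cases hM : toCNe M with
      | none => rw [hM] at hE; cases hE
      | some E' =>
        cases hN : toCNf N with
        | none => rw [hM, hN] at hE; cases hE
        | some C' =>
          rw [hM, hN] at hE
          cases hE
          obtain ⟨Y, h1, h2⟩ := h
          exact ⟨Y, ihM.2 E' hM ρ _ h1, fun β hβ => ihN.1 C' hN ρ β (h2 β hβ)⟩
    constructor
    · intro C hC ρ α h
      rw [toCNf_app] at hC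
      cases hM : toCNe M with
      | none => rw [hM] at hC; cases hC
      | some E' =>
        cases hN : toCNf N with
        | none => rw [hM, hN] at hC; cases hC
        | some C' =>
          rw [hM, hN] at hC
          cases hC
          refine sem_expand _ _ _ _ (key (CNe.app E' C') ?_ ρ α h)
          rw [toCNe_app, hM, hN]
    · exact key
/-! ### S6: normalization by evaluation -/

def Val : List Ty → Ty → Type
  | Γ, .o => CNf Γ .o
  | Γ, .arrow σ τ => ∀ Δ, Ren Γ Δ → Val Δ σ → Val Δ τ

def renVal : {σ : Ty} → {Γ Δ : List Ty} → Ren Γ Δ → Val Γ σ → Val Δ σ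
  | .o, _, _, r, v => renCNf r v
  | .arrow _ _, _, _, r, f => fun Θ r' a => f Θ (Ren.comp r' r) a

mutual
  theorem renCNf_id : ∀ {Γ : List Ty} {σ : Ty} (C : CNf Γ σ), renCNf (Ren.id Γ) C = C
    | _, _, .lam C => by
        show CNf.lam (renCNf (Ren.lift (Ren.id _) _) C) = _
        rw [Ren.lift_id, renCNf_id]
    | _, _, .ne E => by
        show CNf.ne (renCNe (Ren.id _) E) = _
        rw [renCNe_id]
  theorem renCNe_id : ∀ {Γ : List Ty} {σ : Ty} (E : CNe Γ σ), renCNe (Ren.id Γ) E = E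
    | _, _, .var v => rfl
    | _, _, .app E C => by
        show CNe.app (renCNe (Ren.id _) E) (renCNf (Ren.id _) C) = _
        rw [renCNe_id, renCNf_id]
end

theorem renVal_comp {σ : Ty} : ∀ {Γ Δ Θ : List Ty} (r' : Ren Δ Θ) (r : Ren Γ Δ) (v : Val Γ σ),
    renVal r' (renVal r v) = renVal (Ren.comp r' r) v := by
  cases σ with
  | o => intro Γ Δ Θ r' r v; exact renCNf_comp r' r v
  | arrow σ τ => intro Γ Δ Θ r' r v; rfl

theorem renVal_id {σ : Ty} : ∀ {Γ : List Ty} (v : Val Γ σ), renVal (Ren.id Γ) v = v := by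
  cases σ with
  | o => intro Γ v; exact renCNf_id v
  | arrow σ τ => intro Γ v; rfl

def VEnv (Γ Δ : List Ty) : Type := ∀ σ, Var Γ σ → Val Δ σ

def VEnv.cons {Γ Δ : List Ty} {σ : Ty} (a : Val Δ σ) (δ : VEnv Γ Δ) : VEnv (σ :: Γ) Δ :=
  fun _ v => match v with | .zero => a | .succ w => δ _ w

def VEnv.ren {Γ Δ Θ : List Ty} (r : Ren Δ Θ) (δ : VEnv Γ Δ) : VEnv Γ Θ :=
  fun σ v => renVal r (δ σ v)

def VEnv.comp {Γ Γ' Δ : List Ty} (r : Ren Γ Γ') (δ : VEnv Γ' Δ) : VEnv Γ Δ :=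
  fun σ v => δ σ (r σ v)

theorem VEnv.ren_cons {Γ Δ Θ : List Ty} (r : Ren Δ Θ) {σ : Ty} (a : Val Δ σ) (δ : VEnv Γ Δ) :
    VEnv.ren r (VEnv.cons a δ) = VEnv.cons (renVal r a) (VEnv.ren r δ) := by
  funext τ v; cases v <;> rfl

theorem VEnv.ren_ren {Γ Δ Θ Θ' : List Ty} (r' : Ren Θ Θ') (r : Ren Δ Θ) (δ : VEnv Γ Δ) :
    VEnv.ren r' (VEnv.ren r δ) = VEnv.ren (Ren.comp r' r) δ := by
  funext τ v; exact renVal_comp r' r (δ τ v)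

theorem VEnv.ren_id {Γ Δ : List Ty} (δ : VEnv Γ Δ) : VEnv.ren (Ren.id Δ) δ = δ := by
  funext τ v; exact renVal_id (δ τ v)

def Ty.sz : Ty → ℕ
  | .o => 1
  | .arrow σ τ => σ.sz + τ.sz + 1

mutual
  def reflect : {σ : Ty} → {Γ : List Ty} → CNe Γ σ → Val Γ σ
    | .o, _, E => CNf.ne E
    | .arrow _ _, _, E => fun _ r a => reflect (CNe.app (renCNe r E) (reify a))
  def reify : {σ : Ty} → {Γ : List Ty} → Val Γ σ → CNf Γ σ
    | .o, _, v => v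
    | .arrow σ _, Γ, f =>
        CNf.lam (reify (f (σ :: Γ) (fun _ v => Var.succ v) (reflect (CNe.var Var.zero))))
end

def eval : {Γ : List Ty} → {σ : Ty} → Tm Γ σ → {Δ : List Ty} → VEnv Γ Δ → Val Δ σ
  | _, _, .var v, _, δ => δ _ v
  | _, _, .lam M, _, δ => fun Θ r a => eval M (VEnv.cons a (VEnv.ren r δ))
  | _, _, .app M N, Δ, δ => (eval M δ) Δ (Ren.id Δ) (eval N δ)

theorem eval_rename {Γ : List Ty} {σ : Ty} (M : Tm Γ σ) :
    ∀ {Γ' Δ : List Ty} (r : Ren Γ Γ') (δ : VEnv Γ' Δ),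
      eval (rename r M) δ = eval M (VEnv.comp r δ) := by
  induction M with
  | var v => intro Γ' Δ r δ; rfl
  | lam M ih =>
    intro Γ' Δ r δ
    show (fun Θ r' a => eval (rename (Ren.lift r _) M) (VEnv.cons a (VEnv.ren r' δ))) = _
    funext Θ r' a
    rw [ih]
    show eval M (VEnv.comp (Ren.lift r _) (VEnv.cons a (VEnv.ren r' δ)))
       = eval M (VEnv.cons a (VEnv.ren r' (VEnv.comp r δ)))
    congr 1
    funext τ v; cases v <;> rfl
  | app M N ihM ihN =>
    intro Γ' Δ r δ
    show (eval (rename r M) δ) Δ (Ren.id Δ) (eval (rename r N) δ) = _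
    rw [ihM, ihN]; rfl

/-- Kripke partial equivalence on values (with built-in uniformity). -/
def VEq : (σ : Ty) → {Γ : List Ty} → Val Γ σ → Val Γ σ → Prop
  | .o, _, n, n' => n = n'
  | .arrow σ τ, Γ, f, f' =>
      (∀ {Δ : List Ty} (r : Ren Γ Δ) (a a' : Val Δ σ), VEq σ a a' → VEq τ (f Δ r a) (f' Δ r a')) ∧
      (∀ {Δ Θ : List Ty} (r : Ren Γ Δ) (r' : Ren Δ Θ) (a a' : Val Δ σ), VEq σ a a' →
          VEq τ (renVal r' (f Δ r a)) (f Θ (Ren.comp r' r) (renVal r' a'))) ∧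
      (∀ {Δ Θ : List Ty} (r : Ren Γ Δ) (r' : Ren Δ Θ) (a a' : Val Δ σ), VEq σ a a' →
          VEq τ (renVal r' (f' Δ r a)) (f' Θ (Ren.comp r' r) (renVal r' a')))

theorem VEq.symm {σ : Ty} : ∀ {Γ : List Ty} {v v' : Val Γ σ}, VEq σ v v' → VEq σ v' v := by
  induction σ with
  | o => intro Γ v v' h; exact Eq.symm h
  | arrow σ τ ihσ ihτ =>
    intro Γ f f' h
    exact ⟨fun r a a' ha => ihτ (h.1 r a' a (ihσ ha)), h.2.2, h.2.1⟩

theorem VEq.trans {σ : Ty} : ∀ {Γ : List Ty} {v₁ v₂ v₃ : Val Γ σ},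
    VEq σ v₁ v₂ → VEq σ v₂ v₃ → VEq σ v₁ v₃ := by
  induction σ with
  | o => intro Γ v₁ v₂ v₃ h h'; exact Eq.trans h h'
  | arrow σ τ ihσ ihτ =>
    intro Γ f₁ f₂ f₃ h h'
    refine ⟨fun r a a' ha => ?_, h.2.1, h'.2.2⟩
    exact ihτ (h.1 r a a (ihσ ha (VEq.symm ha))) (h'.1 r a a' ha)

theorem VEq.self_left {σ : Ty} {Γ : List Ty} {v v' : Val Γ σ} (h : VEq σ v v') : VEq σ v v :=
  h.trans h.symm

theorem VEq.self_right {σ : Ty} {Γ : List Ty} {v v' : Val Γ σ} (h : VEq σ v v') : VEq σ v' v' :=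
  h.symm.trans h

theorem VEq.ren {σ : Ty} : ∀ {Γ Δ : List Ty} (r : Ren Γ Δ) {v v' : Val Γ σ},
    VEq σ v v' → VEq σ (renVal r v) (renVal r v') := by
  cases σ with
  | o => intro Γ Δ r v v' h; exact congrArg (renCNf r) h
  | arrow σ τ =>
    intro Γ Δ r f f' h
    refine ⟨fun r' a a' ha => h.1 (Ren.comp r' r) a a' ha,
      fun r' r'' a a' ha => h.2.1 (Ren.comp r' r) r'' a a' ha,
      fun r' r'' a a' ha => h.2.2 (Ren.comp r' r) r'' a a' ha⟩

theorem renVal_reflect {σ : Ty} : ∀ {Γ Δ : List Ty} (r : Ren Γ Δ) (E : CNe Γ σ),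
    renVal r (reflect E) = reflect (renCNe r E) := by
  cases σ with
  | o => intro Γ Δ r E; rfl
  | arrow σ τ =>
    intro Γ Δ r E
    funext Θ r' a
    show reflect (CNe.app (renCNe (Ren.comp r' r) E) (reify a))
       = reflect (CNe.app (renCNe r' (renCNe r E)) (reify a))
    rw [renCNe_comp]

mutual
  theorem reify_eq : ∀ {σ : Ty} {Γ : List Ty} {v v' : Val Γ σ}, VEq σ v v' → reify v = reify v'
    | .o, _, _, _, h => h
    | .arrow σ τ, Γ, f, f', h => by
        show CNf.lam (reify (f _ _ _)) = CNf.lam (reify (f' _ _ _))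
        rw [reify_eq (h.1 (fun _ v => Var.succ v) (reflect (CNe.var Var.zero))
          (reflect (CNe.var Var.zero)) (reflect_self (CNe.var Var.zero)))]
  termination_by σ _ _ _ _ => σ.sz
  decreasing_by all_goals (simp [Ty.sz] <;> omega)
  theorem reflect_self : ∀ {σ : Ty} {Γ : List Ty} (E : CNe Γ σ), VEq σ (reflect E) (reflect E)
    | .o, _, E => rfl
    | .arrow σ τ, Γ, E => by
        have unif : ∀ {Δ Θ : List Ty} (r : Ren Γ Δ) (r' : Ren Δ Θ) (a a' : Val Δ σ), VEq σ a a' →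
            VEq τ (renVal r' (reflect (CNe.app (renCNe r E) (reify a))))
              (reflect (CNe.app (renCNe (Ren.comp r' r) E) (reify (renVal r' a')))) := by
          intro Δ Θ r r' a a' ha
          rw [renVal_reflect]
          show VEq τ (reflect (CNe.app (renCNe r' (renCNe r E)) (renCNf r' (reify a)))) _
          rw [renCNe_comp, reify_ren (VEq.self_left ha), reify_eq (VEq.ren r' ha)]
          exact reflect_self _
        exact ⟨fun r a a' ha => by
            show VEq τ (reflect (CNe.app (renCNe r E) (reify a))) (reflect (CNe.app (renCNe r E) (reify a')))
            rw [reify_eq ha]; exact reflect_self _,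
          unif, unif⟩
  termination_by σ _ _ => σ.sz
  decreasing_by all_goals (simp [Ty.sz] <;> omega)
  theorem reify_ren : ∀ {σ : Ty} {Γ Δ : List Ty} {f : Val Γ σ} (hf : VEq σ f f) (r' : Ren Γ Δ),
      renCNf r' (reify f) = reify (renVal r' f)
    | .o, _, _, f, _, r' => rfl
    | .arrow σ τ, Γ, Δ, f, hf, r' => by
        show CNf.lam (renCNf (Ren.lift r' σ) (reify (f _ _ _))) = CNf.lam (reify ((renVal r' f) _ _ _))
        have h0 : VEq τ (f _ (fun _ v => Var.succ v) (reflect (CNe.var Var.zero)))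
            (f _ (fun _ v => Var.succ v) (reflect (CNe.var Var.zero))) :=
          hf.1 _ _ _ (reflect_self _)
        rw [reify_ren h0 (Ren.lift r' σ)]
        have h1 : VEq τ (renVal (Ren.lift r' σ) (f _ (fun _ v => Var.succ v) (reflect (CNe.var Var.zero))))
            (f _ (Ren.comp (Ren.lift r' σ) (fun _ v => Var.succ v)) (renVal (Ren.lift r' σ) (reflect (CNe.var Var.zero)))) :=
          hf.2.1 _ _ _ _ (reflect_self _)
        rw [reify_eq h1, renVal_reflect]
        rfl
  termination_by σ _ _ _ _ _ => σ.sz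
  decreasing_by all_goals (simp [Ty.sz] <;> omega)
end
/-! ### S7: the fundamental lemma of NbE -/

def EnvEq {Γ Δ : List Ty} (δ δ' : VEnv Γ Δ) : Prop := ∀ σ v, VEq σ (δ σ v) (δ' σ v)

theorem EnvEq.symm {Γ Δ} {δ δ' : VEnv Γ Δ} (h : EnvEq δ δ') : EnvEq δ' δ :=
  fun σ v => (h σ v).symm

theorem EnvEq.trans {Γ Δ} {δ₁ δ₂ δ₃ : VEnv Γ Δ} (h : EnvEq δ₁ δ₂) (h' : EnvEq δ₂ δ₃) :
    EnvEq δ₁ δ₃ := fun σ v => (h σ v).trans (h' σ v)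

theorem EnvEq.self_left {Γ Δ} {δ δ' : VEnv Γ Δ} (h : EnvEq δ δ') : EnvEq δ δ :=
  fun σ v => (h σ v).self_left

theorem EnvEq.self_right {Γ Δ} {δ δ' : VEnv Γ Δ} (h : EnvEq δ δ') : EnvEq δ' δ' :=
  fun σ v => (h σ v).self_right

theorem EnvEq.cons {Γ Δ σ} {a a' : Val Δ σ} (ha : VEq σ a a') {δ δ' : VEnv Γ Δ}
    (h : EnvEq δ δ') : EnvEq (VEnv.cons a δ) (VEnv.cons a' δ') := by
  intro τ v
  cases v with
  | zero => exact ha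
  | succ w => exact h τ w

theorem EnvEq.ren {Γ Δ Θ} (r : Ren Δ Θ) {δ δ' : VEnv Γ Δ} (h : EnvEq δ δ') :
    EnvEq (VEnv.ren r δ) (VEnv.ren r δ') := fun σ v => VEq.ren r (h σ v)

/-- Naturality-up-to-`VEq` of evaluation. -/
theorem eval_nat {Γ : List Ty} {σ : Ty} (M : Tm Γ σ) :
    ∀ {Δ Θ : List Ty} {δ δ' : VEnv Γ Δ}, EnvEq δ δ' → ∀ (r : Ren Δ Θ),
      VEq σ (eval M (VEnv.ren r δ)) (renVal r (eval M δ')) := by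
  induction M with
  | var v => intro Δ Θ δ δ' h r; exact VEq.ren r (h _ v)
  | @lam Γ' σ₁ τ B ih =>
    intro Δ Θ δ δ' h r
    have congB : ∀ {Δ'} {δ₁ δ₁' : VEnv (σ₁ :: Γ') Δ'}, EnvEq δ₁ δ₁' →
        VEq τ (eval B δ₁) (eval B δ₁') := by
      intro Δ' δ₁ δ₁' h₁
      have := ih h₁ (Ren.id Δ')
      rwa [VEnv.ren_id, renVal_id] at this
    have unifL : ∀ {Δ₁ Θ₁ : List Ty} (r₁ : Ren Θ Δ₁) (r₂ : Ren Δ₁ Θ₁) (a a' : Val Δ₁ σ₁),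
        VEq σ₁ a a' →
        VEq τ (renVal r₂ (eval B (VEnv.cons a (VEnv.ren r₁ (VEnv.ren r δ)))))
          (eval B (VEnv.cons (renVal r₂ a') (VEnv.ren (Ren.comp r₂ r₁) (VEnv.ren r δ)))) := by
      intro Δ₁ Θ₁ r₁ r₂ a a' ha
      have h1 := ih (EnvEq.cons ha.self_left (EnvEq.ren r₁ (EnvEq.ren r h.self_left))) r₂
      rw [VEnv.ren_cons, VEnv.ren_ren] at h1
      refine h1.symm.trans (congB ?_)
      exact EnvEq.cons (VEq.ren r₂ ha) (EnvEq.ren _ (EnvEq.ren r h.self_left))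
    have unifR : ∀ {Δ₁ Θ₁ : List Ty} (r₁ : Ren Δ Δ₁) (r₂ : Ren Δ₁ Θ₁) (a a' : Val Δ₁ σ₁),
        VEq σ₁ a a' →
        VEq τ (renVal r₂ (eval B (VEnv.cons a (VEnv.ren r₁ δ'))))
          (eval B (VEnv.cons (renVal r₂ a') (VEnv.ren (Ren.comp r₂ r₁) δ'))) := by
      intro Δ₁ Θ₁ r₁ r₂ a a' ha
      have h1 := ih (EnvEq.cons ha.self_left (EnvEq.ren r₁ h.self_right)) r₂
      rw [VEnv.ren_cons, VEnv.ren_ren] at h1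
      refine h1.symm.trans (congB ?_)
      exact EnvEq.cons (VEq.ren r₂ ha) (EnvEq.ren _ h.self_right)
    refine ⟨fun r' a a' ha => ?_, fun r₁ r₂ a a' ha => unifL r₁ r₂ a a' ha,
      fun r₁ r₂ a a' ha => unifR (Ren.comp r₁ r) r₂ a a' ha⟩
    · show VEq τ (eval B (VEnv.cons a (VEnv.ren r' (VEnv.ren r δ))))
        (eval B (VEnv.cons a' (VEnv.ren (Ren.comp r' r) δ')))
      rw [VEnv.ren_ren]
      exact congB (EnvEq.cons ha (EnvEq.ren _ h))
  | @app Γ' σ₁ τ F A ihF ihA =>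
    intro Δ Θ δ δ' h r
    have hF := ihF h r
    have hA := ihA h r
    have hFself : VEq (Ty.arrow σ₁ τ) (eval F δ') (eval F δ') := by
      have := ihF h.self_right (Ren.id Δ)
      rwa [VEnv.ren_id, renVal_id] at this
    have hAself : VEq σ₁ (eval A δ') (eval A δ') := by
      have := ihA h.self_right (Ren.id Δ)
      rwa [VEnv.ren_id, renVal_id] at this
    show VEq τ ((eval F (VEnv.ren r δ)) Θ (Ren.id Θ) (eval A (VEnv.ren r δ)))
      (renVal r ((eval F δ') Δ (Ren.id Δ) (eval A δ')))
    have step1 := hF.1 (Ren.id Θ) _ _ hA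
    have step2 := hFself.2.1 (Ren.id Δ) r _ _ hAself
    exact step1.trans step2.symm

theorem eval_cong {Γ : List Ty} {σ : Ty} (M : Tm Γ σ) {Δ : List Ty} {δ δ' : VEnv Γ Δ}
    (h : EnvEq δ δ') : VEq σ (eval M δ) (eval M δ') := by
  have := eval_nat M h (Ren.id Δ)
  rwa [VEnv.ren_id, renVal_id] at this

/-- Semantic substitution lemma for evaluation. -/
theorem eval_subst {Γ : List Ty} {σ : Ty} (M : Tm Γ σ) :
    ∀ {Γ' Δ : List Ty} (s : Subst Γ Γ') {δ δ' : VEnv Γ' Δ}, EnvEq δ δ' →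
      VEq σ (eval (subst s M) δ) (eval M (fun τ v => eval (s τ v) δ')) := by
  induction M with
  | var v => intro Γ' Δ s δ δ' h; exact eval_cong (s _ v) h
  | @lam Γ₀ σ₁ τ B ih =>
    intro Γ' Δ s δ δ' h
    have key : ∀ {Δ₁ : List Ty} (r : Ren Δ Δ₁) (a a' : Val Δ₁ σ₁), VEq σ₁ a a' →
        VEq τ (eval (subst (Subst.lift s σ₁) B) (VEnv.cons a (VEnv.ren r δ)))
          (eval B (VEnv.cons a' (VEnv.ren r (fun τ' v => eval (s τ' v) δ')))) := by
      intro Δ₁ r a a' ha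
      have h1 := ih (Subst.lift s σ₁)
        (δ := VEnv.cons a (VEnv.ren r δ)) (δ' := VEnv.cons a' (VEnv.ren r δ'))
        (EnvEq.cons ha (EnvEq.ren r h))
      refine h1.trans (eval_cong B ?_)
      intro τ' v
      cases v with
      | zero => exact ha.self_right
      | succ w =>
        show VEq τ' (eval (rename (fun _ u => Var.succ u) (s τ' w)) (VEnv.cons a' (VEnv.ren r δ')))
          (renVal r (eval (s τ' w) δ'))
        erw [eval_rename]
        have : VEnv.comp (fun _ u => Var.succ u) (VEnv.cons a' (VEnv.ren r δ')) = VEnv.ren r δ' := by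
          funext τ'' u; rfl
        rw [this]
        exact eval_nat (s τ' w) h.self_right r
    refine ⟨fun r a a' ha => key r a a' ha, ?_, ?_⟩
    · intro Δ₁ Θ₁ r₁ r₂ a a' ha
      show VEq τ (renVal r₂ (eval (subst (Subst.lift s σ₁) B) (VEnv.cons a (VEnv.ren r₁ δ))))
        (eval (subst (Subst.lift s σ₁) B) (VEnv.cons (renVal r₂ a') (VEnv.ren (Ren.comp r₂ r₁) δ)))
      have h1 := eval_nat (subst (Subst.lift s σ₁) B)
        (EnvEq.cons ha.self_left (EnvEq.ren r₁ h.self_left)) r₂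
      rw [VEnv.ren_cons, VEnv.ren_ren] at h1
      refine h1.symm.trans (eval_cong _ ?_)
      exact EnvEq.cons (VEq.ren r₂ ha) (EnvEq.ren _ h.self_left)
    · intro Δ₁ Θ₁ r₁ r₂ a a' ha
      show VEq τ (renVal r₂ (eval B (VEnv.cons a (VEnv.ren r₁ fun τ' v => eval (s τ' v) δ'))))
        (eval B (VEnv.cons (renVal r₂ a') (VEnv.ren (Ren.comp r₂ r₁) fun τ' v => eval (s τ' v) δ')))
      have henv : EnvEq (Γ := Γ₀) (fun τ' v => eval (s τ' v) δ') (fun τ' v => eval (s τ' v) δ') :=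
        fun τ' v => (eval_cong (s τ' v) h.self_right)
      have h1 := eval_nat B (EnvEq.cons ha.self_left (EnvEq.ren r₁ henv)) r₂
      erw [VEnv.ren_cons, VEnv.ren_ren] at h1
      refine h1.symm.trans (eval_cong _ ?_)
      exact EnvEq.cons (VEq.ren r₂ ha) (EnvEq.ren _ henv)
  | app F A ihF ihA =>
    intro Γ' Δ s δ δ' h
    have hF := ihF s h
    have hA := ihA s h
    exact hF.1 (Ren.id Δ) _ _ hA

/-- The fundamental lemma: βη-equal terms have `VEq`-equal values. -/
theorem fund {Γ : List Ty} {σ : Ty} {M N : Tm Γ σ} (hMN : BetaEta M N) :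
    ∀ {Δ : List Ty} {δ δ' : VEnv Γ Δ}, EnvEq δ δ' → VEq σ (eval M δ) (eval N δ') := by
  induction hMN with
  | refl M => intro Δ δ δ' h; exact eval_cong M h
  | symm _ ih => intro Δ δ δ' h; exact (ih h.symm).symm
  | trans _ _ ih1 ih2 => intro Δ δ δ' h; exact (ih1 h.self_left).trans (ih2 h)
  | app_congr _ _ ih1 ih2 =>
    intro Δ δ δ' h
    exact (ih1 h).1 (Ren.id Δ) _ _ (ih2 h)
  | @lam_congr Γ' σ₁ τ B B' hBB' ih =>
    intro Δ δ δ' h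
    refine ⟨fun r a a' ha => ih (EnvEq.cons ha (EnvEq.ren r h)), ?_, ?_⟩
    · intro Δ₁ Θ₁ r₁ r₂ a a' ha
      have h1 := eval_nat B (EnvEq.cons ha.self_left (EnvEq.ren r₁ h.self_left)) r₂
      rw [VEnv.ren_cons, VEnv.ren_ren] at h1
      exact h1.symm.trans (eval_cong B (EnvEq.cons (VEq.ren r₂ ha) (EnvEq.ren _ h.self_left)))
    · intro Δ₁ Θ₁ r₁ r₂ a a' ha
      have h1 := eval_nat B' (EnvEq.cons ha.self_left (EnvEq.ren r₁ h.self_right)) r₂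
      rw [VEnv.ren_cons, VEnv.ren_ren] at h1
      exact h1.symm.trans (eval_cong B' (EnvEq.cons (VEq.ren r₂ ha) (EnvEq.ren _ h.self_right)))
  | @beta Γ' σ₁ τ B N =>
    intro Δ δ δ' h
    show VEq τ (eval B (VEnv.cons (eval N δ) (VEnv.ren (Ren.id Δ) δ))) (eval (subst1 B N) δ')
    rw [VEnv.ren_id]
    have h1 : VEq τ (eval (subst (Subst.cons N) B) δ') (eval B (fun τ' v => eval (Subst.cons N τ' v) δ')) :=
      eval_subst B (Subst.cons N) h.self_right
    have h2 : (fun τ' (v : Var (σ₁ :: Γ') τ') => eval (Subst.cons N τ' v) δ')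
        = VEnv.cons (eval N δ') δ' := by
      funext τ' v; cases v <;> rfl
    rw [h2] at h1
    refine VEq.trans ?_ h1.symm
    exact eval_cong B (EnvEq.cons (eval_cong N h) h)
  | @eta Γ' σ₁ τ M =>
    intro Δ δ δ' h
    have hMM := eval_cong M h
    refine ⟨fun r a a' ha => ?_, fun r₁ r₂ a a' ha => ?_, fun r₁ r₂ a a' ha => ?_⟩
    · show VEq τ (eval M δ _ r a)
        ((eval (rename (fun _ v => Var.succ v) M) (VEnv.cons a' (VEnv.ren r δ'))) _ (Ren.id _)
          (VEnv.cons a' (VEnv.ren r δ') σ₁ Var.zero))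
      erw [eval_rename]
      have : VEnv.comp (fun _ u => Var.succ u) (VEnv.cons a' (VEnv.ren r δ')) = VEnv.ren r δ' := by
        funext τ'' u; rfl
      rw [this]
      have h1 := eval_nat M h.self_right r
      have h2 := (h1.symm.1 (Ren.id _) a a' ha : VEq τ ((renVal r (eval M δ')) _ (Ren.id _) a)
        ((eval M (VEnv.ren r δ')) _ (Ren.id _) a'))
      exact ((hMM.1 r a a ha.self_left).trans h2)
    · exact hMM.self_left.2.1 r₁ r₂ a a' ha
    · show VEq τ
        (renVal r₂ ((eval (rename (fun _ v => Var.succ v) M) (VEnv.cons a (VEnv.ren r₁ δ'))) _ (Ren.id _)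
          (VEnv.cons a (VEnv.ren r₁ δ') σ₁ Var.zero)))
        ((eval (rename (fun _ v => Var.succ v) M) (VEnv.cons (renVal r₂ a') (VEnv.ren (Ren.comp r₂ r₁) δ'))) _ (Ren.id _)
          (VEnv.cons (renVal r₂ a') (VEnv.ren (Ren.comp r₂ r₁) δ') σ₁ Var.zero))
      erw [eval_rename, eval_rename]
      have e1 : VEnv.comp (fun _ u => Var.succ u) (VEnv.cons a (VEnv.ren r₁ δ')) = VEnv.ren r₁ δ' := by
        funext τ'' u; rfl
      have e2 : VEnv.comp (fun _ u => Var.succ u) (VEnv.cons (renVal r₂ a') (VEnv.ren (Ren.comp r₂ r₁) δ'))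
          = VEnv.ren (Ren.comp r₂ r₁) δ' := by
        funext τ'' u; rfl
      rw [e1, e2]
      show VEq τ (renVal r₂ ((eval M (VEnv.ren r₁ δ')) _ (Ren.id _) a))
        ((eval M (VEnv.ren (Ren.comp r₂ r₁) δ')) _ (Ren.id _) (renVal r₂ a'))
      have hnat1 := eval_nat M h.self_right r₁
      have hself : VEq (Ty.arrow σ₁ τ) (eval M (VEnv.ren r₁ δ')) (eval M (VEnv.ren r₁ δ')) :=
        eval_cong M (EnvEq.ren r₁ h.self_right)
      have step1 := hself.2.1 (Ren.id _) r₂ a a' ha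
      have hnat2 : VEq (Ty.arrow σ₁ τ) (eval M (VEnv.ren (Ren.comp r₂ r₁) δ'))
          (renVal r₂ (eval M (VEnv.ren r₁ δ'))) := by
        have := eval_nat M (EnvEq.ren r₁ h.self_right) r₂
        rwa [VEnv.ren_ren] at this
      have step2 := hnat2.1 (Ren.id _) (renVal r₂ a') (renVal r₂ a') (VEq.ren r₂ ha.self_right)
      exact step1.trans step2.symm
/-! ### S8: nbe, completeness, stability -/

def idEnv (Γ : List Ty) : VEnv Γ Γ := fun _ v => reflect (CNe.var v)

theorem idEnv_self (Γ : List Ty) : EnvEq (idEnv Γ) (idEnv Γ) := fun _ v => reflect_self _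

def nbe {σ : Ty} (M : Tm [] σ) : CNf [] σ := reify (eval M (idEnv []))

theorem nbe_complete {σ : Ty} {M N : Tm [] σ} (h : BetaEta M N) : nbe M = nbe N :=
  reify_eq (fund h (idEnv_self []))

mutual
  theorem stNe : ∀ {Γ : List Ty} {σ : Ty} (E : CNe Γ σ), eval (embNe E) (idEnv Γ) = reflect E
    | Γ, _, .var v => rfl
    | Γ, _, .app E C => by
        show (eval (embNe E) (idEnv Γ)) Γ (Ren.id Γ) (eval (embNf C) (idEnv Γ)) = _
        rw [stNe E]
        show reflect (CNe.app (renCNe (Ren.id Γ) E) (reify (eval (embNf C) (idEnv Γ)))) = _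
        rw [renCNe_id, stNf C]
  termination_by Γ σ E => sizeNe E
  decreasing_by all_goals (simp [sizeNf, sizeNe] <;> omega)
  theorem stNf : ∀ {Γ : List Ty} {σ : Ty} (C : CNf Γ σ), reify (eval (embNf C) (idEnv Γ)) = C
    | Γ, _, @CNf.lam _ σ₁ τ C => by
        show CNf.lam (reify (eval (embNf C)
          (VEnv.cons (reflect (CNe.var (Var.zero : Var (σ₁ :: Γ) σ₁)))
            (VEnv.ren (fun _ v => Var.succ v) (idEnv Γ))))) = _
        have henv : VEnv.cons (reflect (CNe.var (Var.zero : Var (σ₁ :: Γ) σ₁)))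
            (VEnv.ren (fun _ v => Var.succ v) (idEnv Γ)) = idEnv (σ₁ :: Γ) := by
          funext τ' v
          cases v with
          | zero => rfl
          | succ w =>
            show renVal (fun _ v => Var.succ v) (reflect (CNe.var w)) = reflect (CNe.var w.succ)
            erw [renVal_reflect]
            rfl
        rw [henv, stNf C]
    | Γ, _, .ne E => by
        show reify (eval (embNe E) (idEnv Γ)) = CNf.ne E
        rw [stNe E]
        rfl
  termination_by Γ σ C => sizeNf C
  decreasing_by all_goals (simp [sizeNf, sizeNe] <;> omega)
end

theorem nbe_of_normal {σ : Ty} {M : Tm [] σ} (hM : NormalForm M) {C : CNf [] σ}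
    (hC : toCNf M = some C) : nbe M = C := by
  have h1 : BetaEta M (embNf C) := (toC_betaEta M).1 C hC
  rw [nbe_complete h1]
  exact stNf C
/-! ### S9: the principal 1-point construction -/

def outP : {σ : Ty} → Web σ → ℕ
  | .o, a => a
  | .arrow _ _, p => outP p.2

mutual
  /-- Principal point, environment demand and next counter of a canonical normal form. -/
  def peNf : {Γ : List Ty} → {σ : Ty} → CNf Γ σ → ℕ → Web σ × REnv Γ × ℕ
    | _, _, .lam C, n =>
        let r := peNf C n
        ((r.2.1 _ Var.zero, r.1), (REnv.tail r.2.1, r.2.2))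
    | _, _, .ne E, n =>
        let r := peNe E (n : Web Ty.o) (n + 1)
        ((n : Web Ty.o), r)
  /-- Environment demand and next counter of a canonical neutral, given its continuation point. -/
  def peNe : {Γ : List Ty} → {σ : Ty} → CNe Γ σ → Web σ → ℕ → REnv Γ × ℕ
    | _, _, .var v, α, n => (REnv.single v {α}, n)
    | _, _, .app E C, α, n =>
        let rC := peNf C n
        let rE := peNe E (({rC.1} : Multiset _), α) rC.2.2
        (REnv.add rE.1 rC.2.1, rE.2)
end

def ptNf {Γ : List Ty} {σ : Ty} (C : CNf Γ σ) (n : ℕ) : Web σ := (peNf C n).1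
def envNf {Γ : List Ty} {σ : Ty} (C : CNf Γ σ) (n : ℕ) : REnv Γ := (peNf C n).2.1
def nxtNf {Γ : List Ty} {σ : Ty} (C : CNf Γ σ) (n : ℕ) : ℕ := (peNf C n).2.2
def envNe {Γ : List Ty} {σ : Ty} (E : CNe Γ σ) (α : Web σ) (n : ℕ) : REnv Γ := (peNe E α n).1
def nxtNe {Γ : List Ty} {σ : Ty} (E : CNe Γ σ) (α : Web σ) (n : ℕ) : ℕ := (peNe E α n).2

theorem peNf_lam {Γ : List Ty} {σ τ : Ty} (C : CNf (σ :: Γ) τ) (n : ℕ) :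
    ptNf (CNf.lam C) n = (envNf C n σ Var.zero, ptNf C n) ∧
    envNf (CNf.lam C) n = REnv.tail (envNf C n) ∧ nxtNf (CNf.lam C) n = nxtNf C n :=
  ⟨rfl, rfl, rfl⟩

theorem peNf_ne {Γ : List Ty} (E : CNe Γ Ty.o) (n : ℕ) :
    ptNf (CNf.ne E) n = (n : Web Ty.o) ∧
    envNf (CNf.ne E) n = envNe E (n : Web Ty.o) (n + 1) ∧
    nxtNf (CNf.ne E) n = nxtNe E (n : Web Ty.o) (n + 1) :=
  ⟨rfl, rfl, rfl⟩

theorem peNe_app {Γ : List Ty} {σ τ : Ty} (E : CNe Γ (Ty.arrow σ τ)) (C : CNf Γ σ)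
    (α : Web τ) (n : ℕ) :
    envNe (CNe.app E C) α n
      = REnv.add (envNe E ({ptNf C n}, α) (nxtNf C n)) (envNf C n) ∧
    nxtNe (CNe.app E C) α n = nxtNe E ({ptNf C n}, α) (nxtNf C n) :=
  ⟨rfl, rfl⟩

/-! Pushing environments along renamings. -/

def REnv.map : {Γ Δ : List Ty} → Ren Γ Δ → REnv Γ → REnv Δ
  | [], _, _, _ => REnv.zeroE _
  | _ :: _, _, r, ρ =>
      REnv.add (REnv.single (r _ Var.zero) (ρ _ Var.zero))
        (REnv.map (fun τ v => r τ (Var.succ v)) (REnv.tail ρ))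

@[simp] theorem REnv.add_apply {Γ : List Ty} (ρ ρ' : REnv Γ) {σ : Ty} (v : Var Γ σ) :
    REnv.add ρ ρ' σ v = ρ σ v + ρ' σ v := rfl
@[simp] theorem REnv.zeroE_apply {Γ : List Ty} {σ : Ty} (v : Var Γ σ) :
    REnv.zeroE Γ σ v = 0 := rfl
@[simp] theorem REnv.cons_zero {Γ : List Ty} {σ : Ty} (X : Multiset (Web σ)) (ρ : REnv Γ) :
    REnv.cons X ρ σ Var.zero = X := rfl
@[simp] theorem REnv.cons_succ {Γ : List Ty} {σ τ : Ty} (X : Multiset (Web σ)) (ρ : REnv Γ)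
    (w : Var Γ τ) : REnv.cons X ρ τ (Var.succ w) = ρ τ w := rfl
@[simp] theorem REnv.tail_apply {Γ : List Ty} {σ τ : Ty} (ρ : REnv (σ :: Γ)) (w : Var Γ τ) :
    REnv.tail ρ τ w = ρ τ (Var.succ w) := rfl
@[simp] theorem REnv.single_zz {Γ : List Ty} {σ : Ty} (X : Multiset (Web σ)) :
    REnv.single (Var.zero : Var (σ :: Γ) σ) X σ Var.zero = X := rfl
@[simp] theorem REnv.single_zs {Γ : List Ty} {σ τ : Ty} (X : Multiset (Web σ)) (w : Var Γ τ) :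
    REnv.single (Var.zero : Var (σ :: Γ) σ) X τ (Var.succ w) = 0 := rfl
@[simp] theorem REnv.single_sz {Γ : List Ty} {σ τ : Ty} (v : Var Γ σ) (X : Multiset (Web σ)) :
    REnv.single (Var.succ v : Var (τ :: Γ) σ) X τ Var.zero = 0 := rfl
@[simp] theorem REnv.single_ss {Γ : List Ty} {σ τ τ' : Ty} (v : Var Γ σ) (X : Multiset (Web σ))
    (w : Var Γ τ') : REnv.single (Var.succ v : Var (τ :: Γ) σ) X τ' (Var.succ w)
      = REnv.single v X τ' w := rfl

theorem REnv.map_apply_succ {Γ Δ : List Ty} {σ₀ : Ty} (r : Ren (σ₀ :: Γ) Δ) (ρ : REnv (σ₀ :: Γ))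
    {σ : Ty} (v : Var Δ σ) :
    REnv.map r ρ σ v = REnv.single (r σ₀ Var.zero) (ρ σ₀ Var.zero) σ v
      + REnv.map (fun τ w => r τ (Var.succ w)) (REnv.tail ρ) σ v := rfl

theorem REnv.single_empty : ∀ {Γ : List Ty} {σ' : Ty} (u : Var Γ σ') {σ : Ty} (w : Var Γ σ),
    REnv.single u (0 : Multiset (Web σ')) σ w = 0 := by
  intro Γ σ' u
  induction u with
  | zero => intro σ w; cases w <;> simp
  | succ u ihu => intro σ w; cases w <;> simp [ihu]

theorem REnv.map_zeroE : ∀ {Γ Δ : List Ty} (r : Ren Γ Δ) {σ : Ty} (v : Var Δ σ),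
    REnv.map r (REnv.zeroE Γ) σ v = 0 := by
  intro Γ
  induction Γ with
  | nil => intro Δ r σ v; rfl
  | cons σ₀ Γ ih =>
    intro Δ r σ v
    rw [REnv.map_apply_succ]
    have h0 : REnv.tail (REnv.zeroE (σ₀ :: Γ)) = REnv.zeroE Γ := rfl
    erw [h0, ih, REnv.zeroE_apply, REnv.single_empty]
    simp

theorem REnv.single_add {Γ : List Ty} {σ : Ty} (u : Var Γ σ) (X Y : Multiset (Web σ))
    {τ : Ty} (w : Var Γ τ) :
    REnv.single u (X + Y) τ w = REnv.single u X τ w + REnv.single u Y τ w := by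
  induction u with
  | zero => cases w <;> simp
  | succ u ihu => cases w <;> simp [ihu]

theorem REnv.map_add : ∀ {Γ Δ : List Ty} (r : Ren Γ Δ) (ρ ρ' : REnv Γ) {σ : Ty} (v : Var Δ σ),
    REnv.map r (REnv.add ρ ρ') σ v = REnv.map r ρ σ v + REnv.map r ρ' σ v := by
  intro Γ
  induction Γ with
  | nil => intro Δ r ρ ρ' σ v; simp [REnv.map]
  | cons σ₀ Γ ih =>
    intro Δ r ρ ρ' σ v
    rw [REnv.map_apply_succ, REnv.map_apply_succ, REnv.map_apply_succ]
    have h1 : REnv.tail (REnv.add ρ ρ') = REnv.add (REnv.tail ρ) (REnv.tail ρ') := by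
      funext τ w; simp
    erw [show REnv.add ρ ρ' σ₀ Var.zero = ρ σ₀ Var.zero + ρ' σ₀ Var.zero from rfl,
      h1, ih, REnv.single_add]
    abel

theorem REnv.map_single : ∀ {Γ Δ : List Ty} (r : Ren Γ Δ) {σ : Ty} (u : Var Γ σ)
    (X : Multiset (Web σ)) {τ : Ty} (w : Var Δ τ),
    REnv.map r (REnv.single u X) τ w = REnv.single (r σ u) X τ w := by
  intro Γ
  induction Γ with
  | nil => intro Δ r σ u; exact (nomatch u)
  | cons σ₀ Γ ih =>
    intro Δ r σ u X τ w
    cases u with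
    | zero =>
      rw [REnv.map_apply_succ]
      have h1 : REnv.tail (REnv.single (Var.zero : Var (σ₀ :: Γ) σ₀) X) = REnv.zeroE Γ := by
        funext τ' w'; simp
      erw [h1, REnv.map_zeroE, REnv.single_zz]
      simp
    | succ u' =>
      rw [REnv.map_apply_succ]
      have h1 : REnv.tail (REnv.single (Var.succ u' : Var (σ₀ :: Γ) σ) X)
          = REnv.single u' X := by
        funext τ' w'; simp
      have h2 : REnv.single (Var.succ u' : Var (σ₀ :: Γ) σ) X σ₀ Var.zero = 0 := by simp
      erw [h1, h2, ih, REnv.single_empty]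
      simp

theorem REnv.map_succ_comp : ∀ {Γ Δ : List Ty} (r : Ren Γ Δ) {σ' : Ty} (ρ : REnv Γ)
    {τ : Ty} (w : Var (σ' :: Δ) τ),
    REnv.map (fun τ v => (Var.succ (r τ v) : Var (σ' :: Δ) τ)) ρ τ w
      = REnv.cons 0 (REnv.map r ρ) τ w := by
  intro Γ
  induction Γ with
  | nil =>
    intro Δ r σ' ρ τ w
    cases w <;> simp [REnv.map]
  | cons σ₀ Γ ih =>
    intro Δ r σ' ρ τ w
    erw [REnv.map_apply_succ]
    have h2 : REnv.single (Var.succ (r σ₀ Var.zero) : Var (σ' :: Δ) σ₀)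
        (ρ σ₀ Var.zero) τ w = REnv.cons 0 (REnv.single (r σ₀ Var.zero) (ρ σ₀ Var.zero)) τ w := by
      cases w <;> simp
    erw [h2, ih (fun τ w => r τ w.succ)]
    cases w with
    | zero => simp
    | succ w => simp [REnv.map_apply_succ]

theorem REnv.map_id : ∀ {Γ : List Ty} (ρ : REnv Γ) {τ : Ty} (w : Var Γ τ),
    REnv.map (Ren.id Γ) ρ τ w = ρ τ w := by
  intro Γ
  induction Γ with
  | nil => intro ρ τ w; exact (nomatch w)
  | cons σ₀ Γ ih =>
    intro ρ τ w
    rw [REnv.map_apply_succ]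
    have h2 : (fun τ (v : Var Γ τ) => (Ren.id (σ₀ :: Γ)) τ (Var.succ v))
        = fun τ v => (Var.succ (Ren.id Γ τ v) : Var (σ₀ :: Γ) τ) := rfl
    rw [h2]
    cases w with
    | zero => rw [REnv.map_succ_comp]; simp [Ren.id]
    | succ w => rw [REnv.map_succ_comp]; simp [Ren.id, ih]

theorem REnv.map_succ {Γ : List Ty} {σ : Ty} (ρ : REnv Γ) {τ : Ty} (w : Var (σ :: Γ) τ) :
    REnv.map (fun τ v => (Var.succ v : Var (σ :: Γ) τ)) ρ τ w = REnv.cons 0 ρ τ w := by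
  have h2 : (fun τ (v : Var Γ τ) => (Var.succ v : Var (σ :: Γ) τ))
      = fun τ v => (Var.succ (Ren.id Γ τ v) : Var (σ :: Γ) τ) := rfl
  rw [h2, REnv.map_succ_comp]
  cases w with
  | zero => simp
  | succ w => simp [REnv.map_id]

theorem REnv.map_lift {Γ Δ : List Ty} (r : Ren Γ Δ) {σ : Ty} (ρ : REnv (σ :: Γ))
    {τ : Ty} (w : Var (σ :: Δ) τ) :
    REnv.map (Ren.lift r σ) ρ τ w = REnv.cons (ρ σ Var.zero) (REnv.map r (REnv.tail ρ)) τ w := by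
  rw [REnv.map_apply_succ]
  have h2 : (fun τ (v : Var Γ τ) => Ren.lift r σ τ (Var.succ v))
      = fun τ v => (Var.succ (r τ v) : Var (σ :: Δ) τ) := rfl
  rw [show Ren.lift r σ σ Var.zero = (Var.zero : Var (σ :: Δ) σ) from rfl, h2,
    REnv.map_succ_comp]
  cases w with
  | zero => simp
  | succ w => simp

theorem REnv.ext' {Γ : List Ty} {ρ ρ' : REnv Γ} (h : ∀ σ v, ρ σ v = ρ' σ v) : ρ = ρ' :=
  funext fun σ => funext fun v => h σ v

mutual
  theorem peNf_ren : ∀ {Γ Δ : List Ty} (r : Ren Γ Δ) {σ : Ty} (C : CNf Γ σ) (n : ℕ),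
      peNf (renCNf r C) n = (ptNf C n, (REnv.map r (envNf C n), nxtNf C n))
    | _, _, r, _, .lam C, n => by
        have ih := peNf_ren (Ren.lift r _) C n
        show ((envNf (renCNf (Ren.lift r _) C) n _ Var.zero, ptNf (renCNf (Ren.lift r _) C) n),
            (REnv.tail (envNf (renCNf (Ren.lift r _) C) n), nxtNf (renCNf (Ren.lift r _) C) n)) = _
        have h1 : ptNf (renCNf (Ren.lift r _) C) n = ptNf C n := congrArg Prod.fst ih
        have h2 : envNf (renCNf (Ren.lift r _) C) n = REnv.map (Ren.lift r _) (envNf C n) :=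
          congrArg (Prod.fst ∘ Prod.snd) ih
        have h3 : nxtNf (renCNf (Ren.lift r _) C) n = nxtNf C n :=
          congrArg (Prod.snd ∘ Prod.snd) ih
        rw [h1, h2, h3]
        have h4 : REnv.map (Ren.lift r _) (envNf C n) _ Var.zero = envNf C n _ Var.zero := by
          rw [REnv.map_lift]
          simp
        have h5 : REnv.tail (REnv.map (Ren.lift r _) (envNf C n))
            = REnv.map r (REnv.tail (envNf C n)) := by
          apply REnv.ext'; intro σ' v
          rw [REnv.tail_apply, REnv.map_lift]
          simp
        rw [h4, h5]
        rfl
    | _, _, r, _, .ne E, n => by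
        have ih := peNe_ren r E ((n : Web Ty.o)) (n + 1)
        show ((n : Web Ty.o), peNe (renCNe r E) ((n : Web Ty.o)) (n + 1)) = _
        rw [ih]
        rfl
  termination_by Γ Δ r σ C n => sizeNf C
  decreasing_by all_goals (simp [sizeNf, sizeNe] <;> omega)
  theorem peNe_ren : ∀ {Γ Δ : List Ty} (r : Ren Γ Δ) {σ : Ty} (E : CNe Γ σ) (α : Web σ) (n : ℕ),
      peNe (renCNe r E) α n = (REnv.map r (envNe E α n), nxtNe E α n)
    | _, _, r, _, .var v, α, n => by
        show (REnv.single (r _ v) {α}, n) = _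
        have : REnv.map r (REnv.single v {α}) = REnv.single (r _ v) {α} := by
          apply REnv.ext'; intro σ' w; rw [REnv.map_single]
        rw [show envNe (CNe.var v) α n = REnv.single v {α} from rfl, this]
        rfl
    | _, _, r, _, .app E C, α, n => by
        have ihC := peNf_ren r C n
        have h1 : ptNf (renCNf r C) n = ptNf C n := congrArg Prod.fst ihC
        have h2 : envNf (renCNf r C) n = REnv.map r (envNf C n) :=
          congrArg (Prod.fst ∘ Prod.snd) ihC
        have h3 : nxtNf (renCNf r C) n = nxtNf C n := congrArg (Prod.snd ∘ Prod.snd) ihC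
        show (REnv.add (envNe (renCNe r E) ({ptNf (renCNf r C) n}, α) (nxtNf (renCNf r C) n))
            (envNf (renCNf r C) n), nxtNe (renCNe r E) ({ptNf (renCNf r C) n}, α) (nxtNf (renCNf r C) n)) = _
        rw [h1, h2, h3]
        have ihE := peNe_ren r E ({ptNf C n}, α) (nxtNf C n)
        have h4 : envNe (renCNe r E) ({ptNf C n}, α) (nxtNf C n)
            = REnv.map r (envNe E ({ptNf C n}, α) (nxtNf C n)) := congrArg Prod.fst ihE
        have h5 : nxtNe (renCNe r E) ({ptNf C n}, α) (nxtNf C n)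
            = nxtNe E ({ptNf C n}, α) (nxtNf C n) := congrArg Prod.snd ihE
        rw [h4, h5]
        have h6 : REnv.add (REnv.map r (envNe E ({ptNf C n}, α) (nxtNf C n))) (REnv.map r (envNf C n))
            = REnv.map r (REnv.add (envNe E ({ptNf C n}, α) (nxtNf C n)) (envNf C n)) := by
          apply REnv.ext'; intro σ' w; rw [REnv.map_add]; rfl
        rw [h6]
        rfl
  termination_by Γ Δ r σ E α n => sizeNe E
  decreasing_by all_goals (simp [sizeNf, sizeNe] <;> omega)
end
/-! ### S10: existence of the principal derivation -/

theorem env_expand : ∀ (σ : Ty) {Γ : List Ty} (E : CNe Γ σ) (n : ℕ),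
    ∃ m : ℕ, envNf (expand E) n = envNe E (ptNf (expand E) n) m := by
  intro σ
  induction σ with
  | o => intro Γ E n; exact ⟨n + 1, rfl⟩
  | arrow σ τ ihσ ihτ =>
    intro Γ E n
    set V : CNf (σ :: Γ) σ := expand (CNe.var Var.zero) with hV
    set wk : Ren Γ (σ :: Γ) := (fun _ v => Var.succ v) with hwk
    set E'' : CNe (σ :: Γ) τ := CNe.app (renCNe wk E) V with hE''
    have hexp : expand (σ := Ty.arrow σ τ) E = CNf.lam (expand E'') := rfl
    set D : CNf (σ :: Γ) τ := expand E'' with hD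
    obtain ⟨m', hm'⟩ := ihτ E'' n
    set β := ptNf D n with hβ
    set γ := ptNf V m' with hγ
    set n₂ := nxtNf V m' with hn₂
    obtain ⟨m₀, hm₀⟩ := ihσ (CNe.var (Var.zero : Var (σ :: Γ) σ)) m'
    -- envNe E'' β m' = add (envNe (ren succ E) ({γ}, β) n₂) (envNf V m')
    have henv : envNf D n = REnv.add (envNe (renCNe wk E) ({γ}, β) n₂)
        (envNf V m') := hm'
    have hren : envNe (renCNe wk E) ({γ}, β) n₂
        = REnv.map wk (envNe E ({γ}, β) n₂) :=
      congrArg Prod.fst (peNe_ren wk E ({γ}, β) n₂)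
    have hVenv : envNf V m' = REnv.single (Var.zero : Var (σ :: Γ) σ) {γ} := by
      rw [hm₀]; rfl
    have hzero : envNf D n σ Var.zero = {γ} := by
      rw [henv, REnv.add_apply, hren, hVenv, hwk]
      rw [REnv.map_succ]
      simp
    have hpt : ptNf (expand (σ := Ty.arrow σ τ) E) n = ({γ}, β) := by
      show (envNf D n σ Var.zero, ptNf D n) = _
      rw [hzero]
    have htail : envNf (expand (σ := Ty.arrow σ τ) E) n = envNe E ({γ}, β) n₂ := by
      show REnv.tail (envNf D n) = _
      apply REnv.ext'
      intro σ' v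
      rw [REnv.tail_apply, henv, REnv.add_apply, hren, hVenv, hwk, REnv.map_succ]
      simp
    exact ⟨n₂, by rw [htail, hpt]⟩

theorem sem_of_expand {σ : Ty} {Γ : List Ty} (E : CNe Γ σ) (M : Tm Γ σ)
    (hQ : ∀ (α : Web σ) (m : ℕ) (ρ : REnv Γ), REnv.le (envNe E α m) ρ → Sem M ρ α) :
    ∀ (n : ℕ) (ρ : REnv Γ), REnv.le (envNf (expand E) n) ρ → Sem M ρ (ptNf (expand E) n) := by
  intro n ρ hle
  obtain ⟨m, hm⟩ := env_expand σ E n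
  rw [hm] at hle
  exact hQ _ m ρ hle

/-- Existence: a β-normal term admits its own principal point. -/
theorem semB {Γ : List Ty} {σ : Ty} (M : Tm Γ σ) :
    (∀ C, toCNf M = some C → ∀ n ρ, REnv.le (envNf C n) ρ → Sem M ρ (ptNf C n)) ∧
    (∀ E, toCNe M = some E → ∀ (α : Web σ) n ρ, REnv.le (envNe E α n) ρ → Sem M ρ α) := by
  induction M with
  | var v =>
    have hNe : ∀ E, toCNe (Tm.var v) = some E → ∀ (α : Web _) n ρ,
        REnv.le (envNe E α n) ρ → Sem (Tm.var v) ρ α := by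
      intro E hE α n ρ hle
      rw [toCNe_var] at hE
      cases hE
      exact hle _ v α (REnv.mem_single_self v {α} α (Multiset.mem_singleton_self α))
    constructor
    · intro C hC n ρ hle
      rw [toCNf_var] at hC
      cases hC
      exact sem_of_expand (CNe.var v) (Tm.var v) (fun α m ρ' hle' => hNe (CNe.var v) rfl α m ρ' hle')
        n ρ hle
    · exact hNe
  | lam M ih =>
    constructor
    · intro C hC n ρ hle
      rw [toCNf_lam] at hC
      cases hM : toCNf M with
      | none => rw [hM] at hC; cases hC
      | some C' =>
        rw [hM] at hC
        cases hC
        show Sem M (REnv.cons (envNf C' n _ Var.zero) ρ) (ptNf C' n)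
        refine ih.1 C' hM n _ ?_
        intro σ' v x hx
        cases v with
        | zero => exact hx
        | succ w => exact hle σ' w x hx
    · intro E hE; cases hE
  | app M N ihM ihN =>
    have hNe : ∀ E, toCNe (M.app N) = some E → ∀ (α : Web _) n ρ,
        REnv.le (envNe E α n) ρ → Sem (M.app N) ρ α := by
      intro E hE α n ρ hle
      rw [toCNe_app] at hE
      cases hM : toCNe M with
      | none => rw [hM] at hE; cases hE
      | some E' =>
        cases hN : toCNf N with
        | none => rw [hM, hN] at hE; cases hE
        | some C' =>
          rw [hM, hN] at hE
          cases hE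
          refine ⟨{ptNf C' n}, ?_, ?_⟩
          · refine ihM.2 E' hM ({ptNf C' n}, α) (nxtNf C' n) ρ ?_
            intro σ' v x hx
            exact hle σ' v x (by rw [(peNe_app E' C' α n).1]; exact Multiset.mem_add.2 (Or.inl hx))
          · intro β hβ
            rw [Multiset.mem_singleton.1 hβ]
            refine ihN.1 C' hN n ρ ?_
            intro σ' v x hx
            exact hle σ' v x (by rw [(peNe_app E' C' α n).1]; exact Multiset.mem_add.2 (Or.inr hx))
    constructor
    · intro C hC n ρ hle
      rw [toCNf_app] at hC
      cases hM : toCNe M with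
      | none => rw [hM] at hC; cases hC
      | some E' =>
        cases hN : toCNf N with
        | none => rw [hM, hN] at hC; cases hC
        | some C' =>
          rw [hM, hN] at hC
          cases hC
          refine sem_of_expand (CNe.app E' C') (M.app N) (fun α m ρ' hle' => ?_) n ρ hle
          exact hNe (CNe.app E' C') (by rw [toCNe_app, hM, hN]) α m ρ' hle'
    · exact hNe
/-! ### S11: uniqueness of the principal derivation -/

def Entry (Γ : List Ty) : Type := Σ σ : Ty, Var Γ σ × Web σ

abbrev Spine (Γ : List Ty) := Σ τ : Ty, CNe Γ τ × Web τ

def headE : {Γ : List Ty} → {σ : Ty} → CNe Γ σ → Web σ → ℕ → Entry Γ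
  | _, _, .var v, α, _ => ⟨_, v, α⟩
  | _, _, .app E C, α, n => headE E ({ptNf C n}, α) (nxtNf C n)

def PreP : {Γ : List Ty} → {σ : Ty} → CNe Γ σ → Web σ → ℕ → Spine Γ → Prop
  | _, _, .var v, α, _, t => t = ⟨_, (CNe.var v, α)⟩
  | _, _, .app E C, α, n, t => t = ⟨_, (CNe.app E C, α)⟩ ∨ PreP E ({ptNf C n}, α) (nxtNf C n) t

mutual
  theorem nxtNf_lt : ∀ {Γ : List Ty} {σ : Ty} (C : CNf Γ σ) (n : ℕ), n < nxtNf C n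
    | _, _, .lam C, n => nxtNf_lt C n
    | _, _, .ne E, n => lt_of_lt_of_le (Nat.lt_succ_self n) (nxtNe_le E _ (n + 1))
  termination_by Γ σ C n => sizeNf C
  decreasing_by all_goals (simp [sizeNf, sizeNe] <;> omega)
  theorem nxtNe_le : ∀ {Γ : List Ty} {σ : Ty} (E : CNe Γ σ) (α : Web σ) (n : ℕ), n ≤ nxtNe E α n
    | _, _, .var v, α, n => le_refl n
    | _, _, .app E C, α, n =>
        le_trans (le_of_lt (nxtNf_lt C n)) (nxtNe_le E ({ptNf C n}, α) (nxtNf C n))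
  termination_by Γ σ E α n => sizeNe E
  decreasing_by all_goals (simp [sizeNf, sizeNe] <;> omega)
end

theorem pt_out_bound : ∀ {Γ : List Ty} {σ : Ty} (C : CNf Γ σ) (n : ℕ),
    n ≤ outP (ptNf C n) ∧ outP (ptNf C n) < nxtNf C n
  | _, _, .lam C, n => pt_out_bound C n
  | _, _, .ne E, n =>
      ⟨le_refl n, lt_of_lt_of_le (Nat.lt_succ_self n) (nxtNe_le E _ (n + 1))⟩

theorem headE_out : ∀ {Γ : List Ty} {σ : Ty} (E : CNe Γ σ) (α : Web σ) (n : ℕ),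
    outP (headE E α n).2.2 = outP α
  | _, _, .var v, α, n => rfl
  | _, _, .app E C, α, n => headE_out E ({ptNf C n}, α) (nxtNf C n)

theorem headE_mem : ∀ {Γ : List Ty} {σ : Ty} (E : CNe Γ σ) (α : Web σ) (n : ℕ),
    (headE E α n).2.2 ∈ envNe E α n (headE E α n).1 (headE E α n).2.1
  | _, _, .var v, α, n => REnv.mem_single_self v {α} α (Multiset.mem_singleton_self α)
  | Γ, _, .app E C, α, n => by
      have ih := headE_mem E ({ptNf C n}, α) (nxtNf C n)
      rw [show envNe (CNe.app E C) α n
        = REnv.add (envNe E ({ptNf C n}, α) (nxtNf C n)) (envNf C n) from rfl]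
      rw [show headE (CNe.app E C) α n = headE E ({ptNf C n}, α) (nxtNf C n) from rfl]
      exact Multiset.mem_add.2 (Or.inl ih)

mutual
  theorem envNf_bound : ∀ {Γ : List Ty} {σ : Ty} (C : CNf Γ σ) (n : ℕ) {σ' : Ty}
      (v : Var Γ σ') (x : Web σ'), x ∈ envNf C n σ' v → n ≤ outP x ∧ outP x < nxtNf C n
    | _, _, .lam C, n, _, v, x => fun hx => envNf_bound C n (Var.succ v) x hx
    | _, _, .ne E, n, _, v, x => fun hx => by
        rcases envNe_bound E (n : Web Ty.o) (n + 1) (Nat.lt_succ_self n) v x hx with h | h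
        · have hx' : outP x = n := by
            have h1 : outP x = outP (headE E (n : Web Ty.o) (n + 1)).2.2 :=
              congrArg (fun (e : Entry _) => outP e.2.2) h
            rw [headE_out E (n : Web Ty.o) (n + 1)] at h1
            exact h1
          rw [hx']
          exact ⟨le_refl n, lt_of_lt_of_le (Nat.lt_succ_self n) (nxtNe_le E _ (n + 1))⟩
        · exact ⟨le_trans (Nat.le_succ n) h.1, h.2⟩
  termination_by Γ σ C n σ' v x => sizeNf C
  decreasing_by all_goals (simp [sizeNf, sizeNe] <;> omega)
  theorem envNe_bound : ∀ {Γ : List Ty} {σ : Ty} (E : CNe Γ σ) (α : Web σ) (n : ℕ)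
      (hα : outP α < n) {σ' : Ty} (v : Var Γ σ') (x : Web σ'), x ∈ envNe E α n σ' v →
      (⟨σ', v, x⟩ : Entry _) = headE E α n ∨ (n ≤ outP x ∧ outP x < nxtNe E α n)
    | _, _, .var u, α, n, hα, _, v, x => fun hx => by
        left
        exact REnv.single_spec u {α} (fun τ w β => (⟨τ, w, β⟩ : Entry _) = ⟨_, u, α⟩)
          (fun β hβ => by rw [Multiset.mem_singleton.1 hβ]) _ v x hx
    | _, _, .app E C, α, n, hα, _, v, x => fun hx => by
        rw [show envNe (CNe.app E C) α n
          = REnv.add (envNe E ({ptNf C n}, α) (nxtNf C n)) (envNf C n) from rfl] at hx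
        rcases Multiset.mem_add.1 hx with hx | hx
        · rcases envNe_bound E ({ptNf C n}, α) (nxtNf C n)
            (lt_trans hα (nxtNf_lt C n)) v x hx with h | h
          · exact Or.inl h
          · exact Or.inr ⟨le_trans (le_of_lt (nxtNf_lt C n)) h.1, h.2⟩
        · have h := envNf_bound C n v x hx
          exact Or.inr ⟨h.1, lt_of_lt_of_le h.2 (nxtNe_le E ({ptNf C n}, α) (nxtNf C n))⟩
  termination_by Γ σ E α n hα σ' v x => sizeNe E
  decreasing_by all_goals (simp [sizeNf, sizeNe] <;> omega)
end

theorem headE_prefix : ∀ {Γ : List Ty} {σ : Ty} (E : CNe Γ σ) (α : Web σ) (n : ℕ),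
    PreP E α n ⟨(headE E α n).1, (CNe.var (headE E α n).2.1, (headE E α n).2.2)⟩
  | _, _, .var v, α, n => rfl
  | _, _, .app E C, α, n => Or.inr (headE_prefix E ({ptNf C n}, α) (nxtNf C n))

theorem PreP_size : ∀ {Γ : List Ty} {σ : Ty} (E : CNe Γ σ) (α : Web σ) (n : ℕ) (t : Spine Γ),
    PreP E α n t → t = ⟨σ, (E, α)⟩ ∨ Ty.sz σ < Ty.sz t.1
  | _, _, .var v, α, n, t => fun h => Or.inl h
  | _, σ, .app (σ := σ₁) E C, α, n, t => fun h => by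
      rcases h with h | h
      · exact Or.inl h
      · rcases PreP_size E ({ptNf C n}, α) (nxtNf C n) t h with h | h
        · right
          rw [h]
          show Ty.sz σ < Ty.sz (Ty.arrow σ₁ σ)
          simp [Ty.sz]
        · right
          refine lt_trans ?_ h
          show Ty.sz σ < Ty.sz (Ty.arrow σ₁ σ)
          simp [Ty.sz]

/-- The key induction step for spine reconstruction. -/
theorem Pstep : ∀ {Γ : List Ty} {τ : Ty} (E : CNe Γ τ) (α : Web τ) (n : ℕ)
    (hα : outP α < n) {σq τ' : Ty} (Q₁ : CNe Γ (Ty.arrow σq τ')) (Y : Multiset (Web σq))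
    (γ : Web τ'),
    PreP E α n ⟨Ty.arrow σq τ', (Q₁, (Y, γ))⟩ →
    (⟨Ty.arrow σq τ', (Q₁, (Y, γ))⟩ : Spine Γ) ≠ ⟨τ, (E, α)⟩ →
    ∃ (M : CNf Γ σq) (nb : ℕ),
      Y = {ptNf M nb} ∧ n ≤ nb ∧ nxtNf M nb ≤ nxtNe E α n ∧
      REnv.le (envNf M nb) (envNe E α n) ∧
      (∀ σ' (v : Var Γ σ') x, x ∈ envNe E α n σ' v → nb ≤ outP x → outP x < nxtNf M nb →
        x ∈ envNf M nb σ' v) ∧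
      PreP E α n ⟨τ', (CNe.app Q₁ M, γ)⟩
  | _, _, .var u, α, n, hα, σq, τ', Q₁, Y, γ => fun h hne => absurd h hne
  | Γ, τ, .app (σ := σc) E₁ C, α, n, hα, σq, τ', Q₁, Y, γ => fun h hne => by
      rcases h with h | h
      · exact absurd h hne
      · by_cases hcase : (⟨Ty.arrow σq τ', (Q₁, (Y, γ))⟩ : Spine Γ)
            = ⟨Ty.arrow σc τ, (E₁, ({ptNf C n}, α))⟩
        · have hty : Ty.arrow σq τ' = Ty.arrow σc τ := congrArg Sigma.fst hcase
          injection hty with e1 e2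
          subst e1; subst e2
          obtain ⟨-, hhe⟩ := Sigma.mk.inj_iff.mp hcase
          have hpair := eq_of_heq hhe
          injection hpair with hQ hYγ
          injection hYγ with hY hγ
          subst hQ; subst hY; subst hγ
          refine ⟨C, n, rfl, le_refl n, nxtNe_le Q₁ _ _, ?_, ?_, Or.inl rfl⟩
          · intro σ' v x hx
            exact Multiset.mem_add.2 (Or.inr hx)
          · intro σ' v x hx h1 h2
            rcases Multiset.mem_add.1 hx with hx | hx
            · rcases envNe_bound Q₁ ({ptNf C n}, γ) (nxtNf C n)
                (lt_trans hα (nxtNf_lt C n)) v x hx with hh | hh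
              · exfalso
                have hox : outP x = outP γ := by
                  have h1 : outP x = outP (headE Q₁ ({ptNf C n}, γ) (nxtNf C n)).2.2 :=
                    congrArg (fun (e : Entry _) => outP e.2.2) hh
                  rw [headE_out Q₁ ({ptNf C n}, γ) (nxtNf C n)] at h1
                  exact h1
                omega
              · exfalso
                have h3 := hh.1
                omega
            · exact hx
        · obtain ⟨M, nb, hY, hn, hnxt, hle, hfilt, hpre⟩ :=
            Pstep E₁ ({ptNf C n}, α) (nxtNf C n)
              (lt_trans hα (nxtNf_lt C n)) Q₁ Y γ h hcase
          refine ⟨M, nb, hY, le_trans (le_of_lt (nxtNf_lt C n)) hn, hnxt, ?_, ?_, Or.inr hpre⟩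
          · intro σ' v x hx
            exact Multiset.mem_add.2 (Or.inl (hle σ' v x hx))
          · intro σ' v x hx h1 h2
            rcases Multiset.mem_add.1 hx with hx | hx
            · exact hfilt σ' v x hx h1 h2
            · exfalso
              have h3 := (envNf_bound C n v x hx).2
              omega
/-! ### S12: the uniqueness lemma -/

mutual
  theorem lemA_Ne : ∀ {Γ : List Ty} {τ' : Ty} (Q : CNe Γ τ') {τ : Ty} (E : CNe Γ τ)
      (α : Web τ) (n : ℕ) (ρ : REnv Γ) (α' : Web τ'),
      τ = Ty.o →
      outP α < n →
      REnv.le (envNe E α n) ρ →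
      (∀ σ' (v : Var Γ σ') x, x ∈ ρ σ' v → n ≤ outP x → outP x < nxtNe E α n →
        x ∈ envNe E α n σ' v) →
      (∀ σ' (v : Var Γ σ') x, x ∈ ρ σ' v → outP x = outP α →
        (⟨σ', v, x⟩ : Entry Γ) = headE E α n) →
      Sem (embNe Q) ρ α' → outP α' = outP α →
      PreP E α n ⟨τ', (Q, α')⟩
    | Γ, τ', .var v, τ, E, α, n, ρ, α' => by
        intro hbase hα h1 h2 hU hsem hout
        have hent : (⟨τ', v, α'⟩ : Entry Γ) = headE E α n := hU τ' v α' hsem hout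
        have hpre := headE_prefix E α n
        rw [← hent] at hpre
        exact hpre
    | Γ, τ', @CNe.app _ σq _ Q₁ N', τ, E, α, n, ρ, α' => by
        intro hbase hα h1 h2 hU hsem hout
        obtain ⟨Y, h1sem, h2sem⟩ := hsem
        have hpre := lemA_Ne Q₁ E α n ρ (Y, α') hbase hα h1 h2 hU h1sem hout
        have hne : (⟨Ty.arrow σq τ', (Q₁, (Y, α'))⟩ : Spine Γ) ≠ ⟨τ, (E, α)⟩ := by
          intro heq
          have hty : Ty.arrow σq τ' = τ := congrArg Sigma.fst heq
          rw [hbase] at hty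
          exact Ty.noConfusion hty
        obtain ⟨M, nb, hY, hn, hnxt, hle, hfilt, hpre'⟩ := Pstep E α n hα Q₁ Y α' hpre hne
        have hsem' : Sem (embNf N') ρ (ptNf M nb) := by
          refine h2sem _ ?_
          rw [hY]
          exact Multiset.mem_singleton_self _
        have hNM : N' = M := by
          refine lemA_Nf N' M nb ρ ?_ ?_ hsem'
          · intro σ' v x hx
            exact h1 σ' v x (hle σ' v x hx)
          · intro σ' v x hx hb1 hb2
            refine hfilt σ' v x ?_ hb1 hb2
            exact h2 σ' v x hx (le_trans hn hb1) (lt_of_lt_of_le hb2 hnxt)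
        rw [hNM]
        exact hpre'
  termination_by Γ τ' Q => sizeNe Q
  decreasing_by all_goals (simp [sizeNf, sizeNe] <;> omega)
  theorem lemA_Nf : ∀ {Γ : List Ty} {σ : Ty} (Q C : CNf Γ σ) (n : ℕ) (ρ : REnv Γ),
      REnv.le (envNf C n) ρ →
      (∀ σ' (v : Var Γ σ') x, x ∈ ρ σ' v → n ≤ outP x → outP x < nxtNf C n →
        x ∈ envNf C n σ' v) →
      Sem (embNf Q) ρ (ptNf C n) → Q = C
    | Γ, _, .lam Q', C, n, ρ => by
        intro h1 h2 hsem
        cases C with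
        | lam C' =>
          have hsem' : Sem (embNf Q') (REnv.cons (envNf C' n _ Var.zero) ρ) (ptNf C' n) := hsem
          have : Q' = C' := by
            refine lemA_Nf Q' C' n (REnv.cons (envNf C' n _ Var.zero) ρ) ?_ ?_ hsem'
            · intro σ' v x hx
              cases v with
              | zero => exact hx
              | succ w => exact h1 σ' w x hx
            · intro σ' v x hx hb1 hb2
              cases v with
              | zero => exact hx
              | succ w => exact h2 σ' w x hx hb1 hb2
          rw [this]
    | Γ, _, .ne QE, C, n, ρ => by
        intro h1 h2 hsem
        cases C with
        | ne CE =>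
          have hα : @outP Ty.o n < n + 1 := Nat.lt_succ_self n
          have hU : ∀ σ' (v : Var Γ σ') x, x ∈ ρ σ' v → outP x = @outP Ty.o n →
              (⟨σ', v, x⟩ : Entry Γ) = headE CE (n : Web Ty.o) (n + 1) := by
            intro σ' v x hx hox
            have hx2 : x ∈ envNe CE (n : Web Ty.o) (n + 1) σ' v := by
              refine h2 σ' v x hx (le_of_eq hox.symm) ?_
              show outP x < nxtNe CE (n : Web Ty.o) (n + 1)
              rw [show @outP Ty.o n = n from rfl] at hox
              rw [hox]
              exact lt_of_lt_of_le (Nat.lt_succ_self n) (nxtNe_le CE _ (n + 1))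
            rcases envNe_bound CE (n : Web Ty.o) (n + 1) hα v x hx2 with h | h
            · exact h
            · exfalso
              rw [show @outP Ty.o n = n from rfl] at hox
              omega
          have hpre := lemA_Ne QE CE (n : Web Ty.o) (n + 1) ρ (n : Web Ty.o) rfl hα h1
            (fun σ' v x hx hb1 hb2 => h2 σ' v x hx (le_trans (Nat.le_succ n) hb1) hb2)
            hU hsem rfl
          rcases PreP_size CE (n : Web Ty.o) (n + 1) _ hpre with h | h
          · obtain ⟨-, hhe⟩ := Sigma.mk.inj_iff.mp h
            have hpair := eq_of_heq hhe
            injection hpair with hQ hα'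
            rw [hQ]
          · exfalso
            simp [Ty.sz] at h
  termination_by Γ σ Q C n ρ => sizeNf Q
  decreasing_by all_goals (simp [sizeNf, sizeNe] <;> omega)
end
/-! ### S13: the main theorem -/

/-- Every closed simply-typed λ-term `M` in normal form of
type `σ` possesses a principal relational type, its 1-point `𝖬 ∈ ⟦σ⟧`: for
every closed simply-typed λ-term `N` of type `σ`,
`M =βη N` if and only if `⊳ N : 𝖬 : σ`. -/
theorem one_point_principal {σ : Ty} (M : Tm [] σ) (hM : NormalForm M) :
    ∃ x : Web σ, ∀ N : Tm [] σ, BetaEta M N ↔ RelType N x := by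
  obtain ⟨C₀, hC₀⟩ := (toC_total M).1 hM
  refine ⟨ptNf C₀ 0, fun N => ?_⟩
  obtain ⟨P, hNP, hPn⟩ := weak_normalization N
  obtain ⟨CP, hCP⟩ := (toC_total P).1 hPn
  constructor
  · intro h
    have hMP : BetaEta M P := h.trans (BetaEta.of_redStar hNP)
    have hnbe : CP = C₀ := by
      have e1 : nbe M = C₀ := nbe_of_normal hM hC₀
      have e2 : nbe P = CP := nbe_of_normal hPn hCP
      rw [← e1, ← e2]
      exact (nbe_complete hMP).symm
    have hle : REnv.le (envNf CP 0) REnv.nil := by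
      intro σ' v x hx
      exact (nomatch v)
    have hsemP : Sem P REnv.nil (ptNf CP 0) := (semB P).1 CP hCP 0 REnv.nil hle
    rw [hnbe] at hsemP
    exact (Sem.redStar_iff hNP REnv.nil (ptNf C₀ 0)).2 hsemP
  · intro h
    have hsemP : Sem P REnv.nil (ptNf C₀ 0) := (Sem.redStar_iff hNP _ _).1 h
    have hsemC : Sem (embNf CP) REnv.nil (ptNf C₀ 0) := (sem_toC P).1 CP hCP _ _ hsemP
    have hCC : CP = C₀ := by
      refine lemA_Nf CP C₀ 0 REnv.nil ?_ ?_ hsemC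
      · intro σ' v x hx
        exact (nomatch v)
      · intro σ' v x hx
        exact (nomatch v)
    have h1 : BetaEta M (embNf C₀) := (toC_betaEta M).1 C₀ hC₀
    have h2 : BetaEta P (embNf C₀) := by
      rw [← hCC]
      exact (toC_betaEta P).1 CP hCP
    exact (h1.trans h2.symm).trans (BetaEta.of_redStar hNP).symm
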